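/- arXiv:1101.4857 — 2 statements merged into one kernel-verified Lean document; each statement's English description precedes it below -/
import Mathlib

section
/- Let λ_β := lim_{N→∞} −(1/N) log P( sup_{n=0,…,N} B(e^{β n}) ≤ 0 ) (this limit exists by supermultiplicativity). Let c(x) := e^{−x/2}/(1 − e^{−x/2}) for x > 0 and β₀ := 2 log(1 + 1/log 2). Then for β > β₀ one has λ_β ≥ log 2 − c(β), and for β ∈ (0, β₀], with m := ⌈β₀/β⌉, one has λ_β ≥ (log 2 − c(β m))/m. -/
open MeasureTheory ProbabilityTheory Filter Real Set
open scoped ENNReal NNReal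
set_option maxHeartbeats 1000000

/-- A standard one-dimensional Brownian motion started at 0, under the probability
measure `P`: continuous paths, `B 0 = 0`, independent increments, and Gaussian
increments `B t - B s ~ N(0, t - s)` for `0 ≤ s ≤ t`. -/
structure IsStandardBM {Ω : Type*} [MeasurableSpace Ω] (P : Measure Ω) (B : ℝ → Ω → ℝ) : Prop where
  isProb : IsProbabilityMeasure P
  meas : ∀ t : ℝ, Measurable (B t)
  start : ∀ ω, B 0 ω = 0
  cont : ∀ ω, Continuous fun t => B t ω
  gauss : ∀ s t : ℝ, 0 ≤ s → s ≤ t →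
    Measure.map (fun ω => B t ω - B s ω) P = gaussianReal 0 (Real.toNNReal (t - s))
  indep : ∀ (n : ℕ) (t : ℕ → ℝ), Monotone t → (∀ i, 0 ≤ t i) →
    iIndepFun
      (fun i : Fin n => fun ω => B (t (i + 1)) ω - B (t i) ω) P


/-- The survival probability `p β N = P(sup_{n=0,…,N} B(e^{β n}) ≤ 0)`. -/
noncomputable def expSurvival {Ω : Type*} [MeasurableSpace Ω] (P : Measure Ω)
    (B : ℝ → Ω → ℝ) (β : ℝ) (N : ℕ) : ℝ :=
  (P {ω | ∀ n : ℕ, n ≤ N → B (Real.exp (β * n)) ω ≤ 0}).toReal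

/-- The rate `λ_β = lim_{N→∞} -(1/N) log p(N)`, realized as a limsup in `EReal`
(the limit exists in `(0,∞]` by supermultiplicativity, and then equals this limsup). -/
noncomputable def lamBeta {Ω : Type*} [MeasurableSpace Ω] (P : Measure Ω)
    (B : ℝ → Ω → ℝ) (β : ℝ) : EReal :=
  Filter.limsup (fun N : ℕ =>
    ((-(1 / (N : ℝ)) * Real.log (expSurvival P B β N) : ℝ) : EReal)) atTop

namespace BMaux

lemma gaussian_map_neg {v : NNReal} :
    (gaussianReal 0 v).map (fun x => -x) = gaussianReal 0 v := by
  have h := gaussianReal_map_const_mul (μ := 0) (v := v) (-1)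
  have h2 : (NNReal.mk ((-1:ℝ)^2) (sq_nonneg _)) = 1 := by ext; norm_num
  rw [h2, one_mul, mul_zero] at h
  have h3 : (fun x : ℝ => (-1) * x) = fun x => -x := by funext x; ring
  rwa [h3] at h

lemma gaussian_Iic_zero {v : NNReal} (hv : v ≠ 0) :
    gaussianReal 0 v (Iic 0) = 1/2 := by
  set μ := gaussianReal 0 v with hμ
  have hsing : μ {(0:ℝ)} = 0 :=
    gaussianReal_absolutelyContinuous 0 hv (volume_singleton)
  have hIio : μ (Iic 0) = μ (Iio 0) := by
    apply le_antisymm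
    · calc μ (Iic 0) = μ (insert (0:ℝ) (Iio 0)) := by rw [Set.Iio_insert]
        _ ≤ μ {(0:ℝ)} + μ (Iio 0) := by
            rw [Set.insert_eq]; exact measure_union_le _ _
        _ = μ (Iio 0) := by rw [hsing, zero_add]
    · exact measure_mono Set.Iio_subset_Iic_self
  have hneg : μ (Ioi 0) = μ (Iio 0) := by
    have : μ (Ioi (0:ℝ)) = (μ.map (fun x => -x)) (Iio 0) := by
      rw [Measure.map_apply measurable_neg measurableSet_Iio]
      congr 1
      ext x; simp
    rw [this, hμ, gaussian_map_neg]
  have htot : μ (Iic 0) + μ (Ioi 0) = 1 := by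
    have := measure_add_measure_compl (μ := μ) (measurableSet_Iic (a := (0:ℝ)))
    rwa [Set.compl_Iic, measure_univ] at this
  rw [hneg, ← hIio] at htot
  have h2 : 2 * μ (Iic 0) = 1 := by rw [two_mul, htot]
  calc μ (Iic 0) = 2⁻¹ * (2 * μ (Iic 0)) := by
        rw [← mul_assoc, ENNReal.inv_mul_cancel (by norm_num) (by norm_num), one_mul]
    _ = 1/2 := by rw [h2]; norm_num

lemma gaussian_Iic_le {v : NNReal} (hv : v ≠ 0) {b : ℝ} (hb : 0 ≤ b) :
    gaussianReal 0 v (Iic b) ≤ ENNReal.ofReal (1/2 * Real.exp ((4/5) * b / Real.sqrt v)) := by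
  have hvpos : (0:ℝ) < v := by positivity
  have hsq : (0:ℝ) < Real.sqrt v := Real.sqrt_pos.2 hvpos
  have hsub : Iic b ⊆ Iic 0 ∪ Ioc 0 b := by
    intro x hx
    rcases le_or_gt x 0 with h | h
    · exact Or.inl h
    · exact Or.inr ⟨h, hx⟩
  have hIoc : gaussianReal 0 v (Ioc 0 b) ≤ ENNReal.ofReal ((Real.sqrt (2*π*v))⁻¹ * b) := by
    rw [gaussianReal_apply _ hv]
    calc ∫⁻ x in Ioc 0 b, gaussianPDF 0 v x
        ≤ ∫⁻ _ in Ioc 0 b, ENNReal.ofReal ((Real.sqrt (2*π*v))⁻¹) := by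
          apply lintegral_mono
          intro x
          unfold gaussianPDF gaussianPDFReal
          apply ENNReal.ofReal_le_ofReal
          have h1 : Real.exp (-(x-0)^2/(2*v)) ≤ 1 := by
            rw [Real.exp_le_one_iff]
            apply div_nonpos_of_nonpos_of_nonneg
            · simp [sq_nonneg]
            · positivity
          calc (Real.sqrt (2*π*v))⁻¹ * Real.exp (-(x-0)^2/(2*v))
              ≤ (Real.sqrt (2*π*v))⁻¹ * 1 := by
                apply mul_le_mul_of_nonneg_left h1 (by positivity)
            _ = _ := by ring
      _ = ENNReal.ofReal ((Real.sqrt (2*π*v))⁻¹) * volume (Ioc 0 b) := by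
          rw [setLIntegral_const]
      _ = ENNReal.ofReal ((Real.sqrt (2*π*v))⁻¹ * b) := by
          rw [Real.volume_Ioc, sub_zero, ENNReal.ofReal_mul (by positivity)]
  have hpi : (5/2) * Real.sqrt v ≤ Real.sqrt (2*π*v) := by
    rw [show (2*π*v : ℝ) = (2*π) * v by ring, Real.sqrt_mul (by positivity)]
    have h52 : (5/2:ℝ) ≤ Real.sqrt (2*π) := by
      have : ((5:ℝ)/2)^2 ≤ 2*π := by nlinarith [Real.pi_gt_d6]
      nlinarith [Real.sq_sqrt (show (0:ℝ) ≤ 2*π by positivity),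
        Real.sqrt_nonneg (2*π)]
    nlinarith [Real.sqrt_nonneg (v:ℝ)]
  have h2 : (Real.sqrt (2*π*v))⁻¹ * b ≤ (2/5) * (b / Real.sqrt v) := by
    rw [inv_mul_eq_div, div_le_iff₀ (by positivity), mul_comm ((2:ℝ)/5) _, div_mul_eq_mul_div,
      div_mul_eq_mul_div, le_div_iff₀ hsq]
    nlinarith
  have h3 : 1/2 + (Real.sqrt (2*π*v))⁻¹ * b ≤ 1/2 * Real.exp ((4/5) * b / Real.sqrt v) := by
    have hexp := Real.add_one_le_exp ((4/5) * b / Real.sqrt v)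
    have hb' : (0:ℝ) ≤ b / Real.sqrt v := by positivity
    rw [mul_div_assoc] at hexp ⊢
    nlinarith
  calc gaussianReal 0 v (Iic b) ≤ gaussianReal 0 v (Iic 0 ∪ Ioc 0 b) := measure_mono hsub
    _ ≤ gaussianReal 0 v (Iic 0) + gaussianReal 0 v (Ioc 0 b) := measure_union_le _ _
    _ ≤ ENNReal.ofReal (1/2) + ENNReal.ofReal ((Real.sqrt (2*π*v))⁻¹ * b) := by
        rw [gaussian_Iic_zero hv]
        refine add_le_add (le_of_eq ?_) hIoc
        rw [ENNReal.ofReal_div_of_pos (by norm_num)]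
        norm_num
    _ = ENNReal.ofReal (1/2 + (Real.sqrt (2*π*v))⁻¹ * b) := by
        rw [ENNReal.ofReal_add (by norm_num) (by positivity)]
    _ ≤ ENNReal.ofReal (1/2 * Real.exp ((4/5) * b / Real.sqrt v)) :=
        ENNReal.ofReal_le_ofReal h3

lemma measurable_gaussianPDF' (μ : ℝ) (v : NNReal) : Measurable (gaussianPDF μ v) :=
  ENNReal.measurable_ofReal.comp (measurable_gaussianPDFReal μ v)

lemma tilt {v : NNReal} (hv : v ≠ 0) (θ a : ℝ) :
    ∫⁻ x, (Iic a).indicator (fun x => ENNReal.ofReal (Real.exp (-θ * x))) x ∂(gaussianReal 0 v)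
      = ENNReal.ofReal (Real.exp (θ^2 * v / 2)) * gaussianReal 0 v (Iic (a + θ * v)) := by
  have hv' : (0:ℝ) < v := by positivity
  have key : ∀ x : ℝ, Real.exp (-θ*x) * gaussianPDFReal 0 v x
      = Real.exp (θ^2*v/2) * gaussianPDFReal (-(θ*(v:ℝ))) v x := by
    intro x
    simp only [gaussianPDFReal]
    have hE : -θ*x + -(x-0)^2/(2*(v:ℝ)) = θ^2*(v:ℝ)/2 + -(x - -(θ*(v:ℝ)))^2/(2*(v:ℝ)) := by
      field_simp
      ring
    calc Real.exp (-θ*x) * ((Real.sqrt (2*π*v))⁻¹ * Real.exp (-(x-0)^2/(2*(v:ℝ))))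
        = (Real.sqrt (2*π*v))⁻¹ * Real.exp (-θ*x + -(x-0)^2/(2*(v:ℝ))) := by
          rw [Real.exp_add]; ring
      _ = (Real.sqrt (2*π*v))⁻¹ * Real.exp (θ^2*(v:ℝ)/2 + -(x - -(θ*(v:ℝ)))^2/(2*(v:ℝ))) := by
          rw [hE]
      _ = Real.exp (θ^2*(v:ℝ)/2) * ((Real.sqrt (2*π*v))⁻¹ * Real.exp (-(x - -(θ*(v:ℝ)))^2/(2*(v:ℝ)))) := by
          rw [Real.exp_add]; ring
  have hfmeas : Measurable fun x : ℝ => (Iic a).indicator (fun x => ENNReal.ofReal (Real.exp (-θ * x))) x :=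
    (ENNReal.measurable_ofReal.comp (Real.measurable_exp.comp (measurable_const.mul measurable_id))).indicator
      measurableSet_Iic
  rw [gaussianReal_of_var_ne_zero 0 hv,
    lintegral_withDensity_eq_lintegral_mul _ (measurable_gaussianPDF' 0 v) hfmeas]
  have key2 : (fun x => (gaussianPDF 0 v * fun x => (Iic a).indicator (fun x => ENNReal.ofReal (Real.exp (-θ * x))) x) x)
      = fun x => ENNReal.ofReal (Real.exp (θ^2*v/2)) * (Iic a).indicator (gaussianPDF (-(θ*(v:ℝ))) v) x := by
    funext x
    simp only [Pi.mul_apply]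
    by_cases hx : x ∈ Iic a
    · rw [Set.indicator_of_mem hx, Set.indicator_of_mem hx, gaussianPDF, gaussianPDF,
        ← ENNReal.ofReal_mul (gaussianPDFReal_nonneg _ _ _), ← ENNReal.ofReal_mul (Real.exp_nonneg _)]
      congr 1
      rw [mul_comm]
      exact key x
    · rw [Set.indicator_of_notMem hx, Set.indicator_of_notMem hx, mul_zero, mul_zero]
  rw [key2, lintegral_const_mul _ ((measurable_gaussianPDF' _ v).indicator measurableSet_Iic),
    lintegral_indicator measurableSet_Iic]
  congr 1
  rw [← gaussianReal_apply _ hv, ← gaussianReal_of_var_ne_zero 0 hv]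
  have hmap := gaussianReal_map_add_const (μ := 0) (v := v) (-(θ*(v:ℝ)))
  rw [zero_add] at hmap
  rw [← hmap, Measure.map_apply (measurable_add_const _) measurableSet_Iic]
  congr 1
  ext x
  simp only [Set.mem_preimage, Set.mem_Iic]
  constructor <;> intro h <;> linarith

lemma key_bound {v : NNReal} (hv : v ≠ 0) {θ s : ℝ} (hθ : 0 ≤ θ) (hs : s ≤ 0) :
    ∫⁻ y, (Iic (-s)).indicator (fun y => ENNReal.ofReal (Real.exp (-θ * (s + y)))) y ∂(gaussianReal 0 v)
      ≤ ENNReal.ofReal ((1/2) * Real.exp (θ^2*v/2 + (4/5)*θ*Real.sqrt v)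
          * Real.exp (-(θ + (4/5)/Real.sqrt v) * s)) := by
  have hv' : (0:ℝ) < v := by positivity
  have hσ : (0:ℝ) < Real.sqrt v := Real.sqrt_pos.2 hv'
  have hσ2 : Real.sqrt v ^ 2 = (v:ℝ) := Real.sq_sqrt (by positivity)
  have h1 : ∀ y, (Iic (-s)).indicator (fun y => ENNReal.ofReal (Real.exp (-θ * (s + y)))) y
      = ENNReal.ofReal (Real.exp (-θ * s)) * (Iic (-s)).indicator (fun y => ENNReal.ofReal (Real.exp (-θ * y))) y := by
    intro y
    by_cases hy : y ∈ Iic (-s)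
    · rw [Set.indicator_of_mem hy, Set.indicator_of_mem hy,
        ← ENNReal.ofReal_mul (Real.exp_nonneg _), ← Real.exp_add]
      ring_nf
    · rw [Set.indicator_of_notMem hy, Set.indicator_of_notMem hy, mul_zero]
  have hmeas2 : Measurable fun y : ℝ => ENNReal.ofReal (Real.exp (-θ * y)) := by fun_prop
  rw [lintegral_congr h1, lintegral_const_mul _ (hmeas2.indicator measurableSet_Iic),
    tilt hv θ (-s)]
  have hb : (0:ℝ) ≤ -s + θ * v := by nlinarith
  calc ENNReal.ofReal (Real.exp (-θ*s)) * (ENNReal.ofReal (Real.exp (θ^2*v/2)) * gaussianReal 0 v (Iic (-s + θ*v)))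
      ≤ ENNReal.ofReal (Real.exp (-θ*s)) * (ENNReal.ofReal (Real.exp (θ^2*v/2))
          * ENNReal.ofReal (1/2 * Real.exp ((4/5) * (-s + θ*v) / Real.sqrt v))) := by
        gcongr
        exact gaussian_Iic_le hv hb
    _ = ENNReal.ofReal ((1/2) * Real.exp (θ^2*v/2 + (4/5)*θ*Real.sqrt v)
          * Real.exp (-(θ + (4/5)/Real.sqrt v) * s)) := by
        rw [← ENNReal.ofReal_mul (by positivity), ← ENNReal.ofReal_mul (by positivity)]
        congr 1
        have e1 : ∀ a b c : ℝ, Real.exp a * (Real.exp b * (1/2 * Real.exp c))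
            = 1/2 * Real.exp (a+b+c) := by
          intro a b c; rw [Real.exp_add, Real.exp_add]; ring
        have e2 : ∀ a b : ℝ, 1/2 * Real.exp a * Real.exp b = 1/2 * Real.exp (a+b) := by
          intro a b; rw [Real.exp_add]; ring
        rw [e1, e2]
        congr 1
        set σ := Real.sqrt (v:ℝ) with hσdef
        have hv2 : (v:ℝ) = σ^2 := hσ2.symm
        rw [hv2]
        field_simp
        ring


variable {Ω : Type*} [MeasurableSpace Ω] {P : Measure Ω} {B : ℝ → Ω → ℝ}

/-- Times `0, 1, e^β, e^{2β}, …`. -/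
noncomputable def ttim (β : ℝ) : ℕ → ℝ
  | 0 => 0
  | k+1 => Real.exp (β * k)

lemma ttim_nonneg (β : ℝ) : ∀ i, 0 ≤ ttim β i
  | 0 => le_refl 0
  | k+1 => (Real.exp_pos _).le

lemma ttim_mono {β : ℝ} (hβ : 0 < β) : Monotone (ttim β) := by
  apply monotone_nat_of_le_succ
  intro k
  match k with
  | 0 => exact (Real.exp_pos _).le
  | k+1 =>
    apply Real.exp_le_exp.2
    have : (k:ℝ) ≤ (k+1:ℕ) := by push_cast; linarith
    nlinarith

lemma ttim_strict {β : ℝ} (hβ : 0 < β) (k : ℕ) : ttim β k < ttim β (k+1) := by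
  match k with
  | 0 => exact Real.exp_pos _
  | k+1 =>
    apply Real.exp_lt_exp.2
    have : (k:ℝ) < (k+1:ℕ) := by push_cast; linarith
    nlinarith

/-- Increments of `B` along `ttim`. -/
noncomputable def Xinc (B : ℝ → Ω → ℝ) (β : ℝ) (k : ℕ) : Ω → ℝ :=
  fun ω => B (ttim β (k+1)) ω - B (ttim β k) ω

lemma Xinc_meas (hB : IsStandardBM P B) (β : ℝ) (k : ℕ) : Measurable (Xinc B β k) :=
  (hB.meas _).sub (hB.meas _)

lemma telescope (hB : IsStandardBM P B) (β : ℝ) (n : ℕ) (ω : Ω) :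
    ∑ k ∈ Finset.range (n+1), Xinc B β k ω = B (Real.exp (β * n)) ω := by
  have h := Finset.sum_range_sub (f := fun k => B (ttim β k) ω) (n := n+1)
  unfold Xinc
  rw [h]
  show B (ttim β (n+1)) ω - B (ttim β 0) ω = _
  have h0 : ttim β 0 = 0 := rfl
  rw [h0, hB.start, sub_zero]
  rfl

/-- The survival event. -/
def Aset (B : ℝ → Ω → ℝ) (β : ℝ) (N : ℕ) : Set Ω :=
  {ω | ∀ n : ℕ, n ≤ N → B (Real.exp (β * n)) ω ≤ 0}

lemma meas_Aset (hB : IsStandardBM P B) (β : ℝ) (N : ℕ) : MeasurableSet (Aset B β N) := by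
  have : Aset B β N = ⋂ (n : ℕ) (_ : n ≤ N), (fun ω => B (Real.exp (β * n)) ω) ⁻¹' (Iic 0) := by
    ext ω; simp [Aset]
  rw [this]
  exact MeasurableSet.iInter fun n => MeasurableSet.iInter fun _ =>
    (hB.meas _) measurableSet_Iic

lemma var_pos {β : ℝ} (hβ : 0 < β) (k : ℕ) : 0 < ttim β (k+1) - ttim β k :=
  sub_pos.2 (ttim_strict hβ k)

lemma law_Xinc (hB : IsStandardBM P B) {β : ℝ} (hβ : 0 < β) (k : ℕ) :
    P.map (Xinc B β k) = gaussianReal 0 ((ttim β (k+1) - ttim β k).toNNReal) :=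
  hB.gauss _ _ (ttim_nonneg β k) (ttim_mono hβ (Nat.le_succ k))

lemma var_nnreal_ne {β : ℝ} (hβ : 0 < β) (k : ℕ) :
    (ttim β (k+1) - ttim β k).toNNReal ≠ 0 := by
  simp only [ne_eq, Real.toNNReal_eq_zero, not_le]
  exact var_pos hβ k

lemma pos_Aset (hB : IsStandardBM P B) {β : ℝ} (hβ : 0 < β) (N : ℕ) :
    0 < P (Aset B β N) := by
  haveI := hB.isProb
  have hInd := hB.indep (N+1) (ttim β) (ttim_mono hβ) (ttim_nonneg β)
  rw [iIndepFun_iff_measure_inter_preimage_eq_mul] at hInd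
  have h := hInd Finset.univ (sets := fun _ => Iic (0:ℝ)) (fun _ _ => measurableSet_Iic)
  have hsub : (⋂ i ∈ Finset.univ,
      (fun i : Fin (N+1) => fun ω => B (ttim β (i+1)) ω - B (ttim β i) ω) i ⁻¹' Iic 0)
      ⊆ Aset B β N := by
    intro ω hω
    simp only [Set.mem_iInter, Set.mem_preimage, Set.mem_Iic, Finset.mem_univ,
      forall_true_left] at hω
    intro n hn
    rw [← telescope hB β n ω]
    apply Finset.sum_nonpos
    intro k hk
    have hk' : k < N+1 := by
      have := Finset.mem_range.1 hk
      omega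
    exact hω ⟨k, hk'⟩
  have heach : ∀ i : Fin (N+1),
      P ((fun ω => B (ttim β ((i:ℕ)+1)) ω - B (ttim β (i:ℕ)) ω) ⁻¹' Iic 0) = 1/2 := by
    intro i
    have : P ((fun ω => B (ttim β ((i:ℕ)+1)) ω - B (ttim β (i:ℕ)) ω) ⁻¹' Iic 0)
        = (P.map (Xinc B β i)) (Iic 0) := by
      rw [Measure.map_apply (Xinc_meas hB β i) measurableSet_Iic]
      rfl
    rw [this, law_Xinc hB hβ, gaussian_Iic_zero (var_nnreal_ne hβ i)]
  calc (0:ℝ≥0∞) < (1/2)^(N+1) := ENNReal.pow_pos (by norm_num) _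
    _ = ∏ i : Fin (N+1), ((1:ℝ≥0∞)/2) := by
        rw [Finset.prod_const, Finset.card_univ, Fintype.card_fin]
    _ = P (⋂ i ∈ Finset.univ,
        (fun i : Fin (N+1) => fun ω => B (ttim β (i+1)) ω - B (ttim β i) ω) i ⁻¹' Iic 0) := by
        rw [h]
        exact (Finset.prod_congr rfl (fun i _ => (heach i))).symm
    _ ≤ P (Aset B β N) := measure_mono hsub

section Step

variable {Ω : Type*} [MeasurableSpace Ω] {P : Measure Ω} {B : ℝ → Ω → ℝ}

lemma step (hB : IsStandardBM P B) {β : ℝ} (hβ : 0 < β) (n : ℕ) {θ : ℝ} (hθ : 0 ≤ θ) :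
    ∫⁻ ω, (Aset B β (n+1)).indicator
        (fun ω => ENNReal.ofReal (Real.exp (-θ * B (Real.exp (β * (n+1:ℕ))) ω))) ω ∂P
      ≤ ENNReal.ofReal ((1/2) * Real.exp (θ^2 * ((ttim β (n+2) - ttim β (n+1)).toNNReal : ℝ)/2
            + (4/5)*θ*Real.sqrt ((ttim β (n+2) - ttim β (n+1)).toNNReal : ℝ)))
        * ∫⁻ ω, (Aset B β n).indicator
            (fun ω => ENNReal.ofReal (Real.exp
              (-(θ + (4/5)/Real.sqrt ((ttim β (n+2) - ttim β (n+1)).toNNReal : ℝ))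
                * B (Real.exp (β * n)) ω))) ω ∂P := by
  haveI := hB.isProb
  set v : NNReal := (ttim β (n+2) - ttim β (n+1)).toNNReal with hvdef
  have hv0 : v ≠ 0 := var_nnreal_ne hβ (n+1)
  set θ' : ℝ := θ + (4/5)/Real.sqrt (v:ℝ) with hθ'def
  set W : Ω → (ℕ → ℝ) := fun ω k => if k ≤ n then Xinc B β k ω else 0 with hWdef
  set V : Ω → ℝ := Xinc B β (n+1) with hVdef
  have hWmeas : Measurable W := by
    apply measurable_pi_lambda
    intro k
    show Measurable fun a => if k ≤ n then Xinc B β k a else 0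
    by_cases hk : k ≤ n
    · simp only [if_pos hk]
      exact Xinc_meas hB β k
    · simp only [if_neg hk]
      exact measurable_const
  have hVmeas : Measurable V := Xinc_meas hB β (n+1)
  -- independence of W and V
  have hIndep : IndepFun W V P := by
    have hi := hB.indep (n+2) (ttim β) (ttim_mono hβ) (ttim_nonneg β)
    have hmeasi : ∀ i : Fin (n+2),
        Measurable ((fun i : Fin (n+2) => fun ω => B (ttim β (i+1)) ω - B (ttim β i) ω) i) :=
      fun i => (hB.meas _).sub (hB.meas _)
    set S : Finset (Fin (n+2)) := Finset.univ.filter (fun i : Fin (n+2) => (i:ℕ) ≤ n) with hSdef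
    set T : Finset (Fin (n+2)) := {Fin.last (n+1)} with hTdef
    have hST : Disjoint S T := by
      rw [Finset.disjoint_left]
      intro i hiS hiT
      rw [hSdef, Finset.mem_filter] at hiS
      rw [hTdef, Finset.mem_singleton] at hiT
      subst hiT
      simp [Fin.last] at hiS
    have h2 := hi.indepFun_finset S T hST hmeasi
    have hmemS : ∀ k : ℕ, ∀ hk : k ≤ n, (⟨k, by omega⟩ : Fin (n+2)) ∈ S := by
      intro k hk
      rw [hSdef, Finset.mem_filter]
      exact ⟨Finset.mem_univ _, hk⟩
    set φ : (S → ℝ) → (ℕ → ℝ) := fun u k =>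
      if h : k ≤ n then u ⟨⟨k, by omega⟩, hmemS k h⟩ else 0 with hφdef
    have hφmeas : Measurable φ := by
      apply measurable_pi_lambda
      intro k
      by_cases hk : k ≤ n
      · simp only [hφdef, hk, dif_pos]
        exact measurable_pi_apply _
      · simp only [hφdef, hk, dif_neg, not_false_iff]
        exact measurable_const
    have hmemT : Fin.last (n+1) ∈ T := by rw [hTdef]; exact Finset.mem_singleton_self _
    set ψ : (T → ℝ) → ℝ := fun u => u ⟨Fin.last (n+1), hmemT⟩ with hψdef
    have hψmeas : Measurable ψ := measurable_pi_apply _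
    have h3 := h2.comp hφmeas hψmeas
    have hWeq : W = φ ∘ (fun a (i : S) =>
        (fun i : Fin (n+2) => fun ω => B (ttim β (i+1)) ω - B (ttim β i) ω) i a) := by
      funext ω k
      by_cases hk : k ≤ n
      · simp only [Function.comp_apply, hφdef, hk, dif_pos, hWdef, if_pos]
        rfl
      · simp only [Function.comp_apply, hφdef, hk, dif_neg, not_false_iff, hWdef, if_neg]
    have hVeq : V = ψ ∘ (fun a (i : T) =>
        (fun i : Fin (n+2) => fun ω => B (ttim β (i+1)) ω - B (ttim β i) ω) i a) := by
      funext ω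
      simp only [Function.comp_apply, hψdef, hVdef]
      rfl
    rw [hWeq, hVeq]
    exact h3
  have hmapV : P.map V = gaussianReal 0 v := law_Xinc hB hβ (n+1)
  have hjoint : P.map (fun ω => (W ω, V ω)) = (P.map W).prod (gaussianReal 0 v) := by
    rw [← hmapV]
    exact (indepFun_iff_map_prod_eq_prod_map_map hWmeas.aemeasurable hVmeas.aemeasurable).1 hIndep
  -- the function H on the product space
  set HS : Set ((ℕ → ℝ) × ℝ) := {p | (∀ m : ℕ, m ≤ n → ∑ k ∈ Finset.range (m+1), p.1 k ≤ 0)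
      ∧ (∑ k ∈ Finset.range (n+1), p.1 k) + p.2 ≤ 0} with hHSdef
  set H : (ℕ → ℝ) × ℝ → ℝ≥0∞ := fun p => HS.indicator
      (fun p => ENNReal.ofReal (Real.exp (-θ * ((∑ k ∈ Finset.range (n+1), p.1 k) + p.2)))) p
    with hHdef
  have hsummeas : ∀ m : ℕ, Measurable (fun p : (ℕ → ℝ) × ℝ => ∑ k ∈ Finset.range (m+1), p.1 k) :=
    fun m => Finset.measurable_sum _ (fun k _ => (measurable_pi_apply k).comp measurable_fst)
  have hHSmeas : MeasurableSet HS := by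
    have : HS = (⋂ (m : ℕ) (_ : m ≤ n),
        {p : (ℕ → ℝ) × ℝ | ∑ k ∈ Finset.range (m+1), p.1 k ≤ 0})
        ∩ {p : (ℕ → ℝ) × ℝ | (∑ k ∈ Finset.range (n+1), p.1 k) + p.2 ≤ 0} := by
      ext p; simp [hHSdef]
    rw [this]
    apply MeasurableSet.inter
    · exact MeasurableSet.iInter fun m => MeasurableSet.iInter fun _ =>
        measurableSet_le (hsummeas m) measurable_const
    · exact measurableSet_le ((hsummeas n).add measurable_snd) measurable_const
  have hHmeas : Measurable H := by
    apply Measurable.indicator _ hHSmeas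
    exact ENNReal.measurable_ofReal.comp (Real.measurable_exp.comp
      (measurable_const.mul ((hsummeas n).add measurable_snd)))
  -- partial sums of W
  have hsumW : ∀ (ω : Ω) (m : ℕ), m ≤ n →
      ∑ k ∈ Finset.range (m+1), W ω k = B (Real.exp (β * m)) ω := by
    intro ω m hm
    rw [← telescope hB β m ω]
    apply Finset.sum_congr rfl
    intro k hk
    have hk' : k ≤ n := by
      have := Finset.mem_range.1 hk; omega
    simp only [hWdef, if_pos hk']
  have hsumWV : ∀ ω : Ω, (∑ k ∈ Finset.range (n+1), W ω k) + V ω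
      = B (Real.exp (β * (n+1:ℕ))) ω := by
    intro ω
    rw [hsumW ω n le_rfl]
    show B (Real.exp (β * n)) ω + (B (ttim β (n+2)) ω - B (ttim β (n+1)) ω) = _
    have h1 : ttim β (n+1) = Real.exp (β * n) := rfl
    have h2 : ttim β (n+2) = Real.exp (β * (n+1:ℕ)) := rfl
    rw [h1, h2]
    ring
  -- pointwise identification
  have hpoint : ∀ ω : Ω, H (W ω, V ω) = (Aset B β (n+1)).indicator
      (fun ω => ENNReal.ofReal (Real.exp (-θ * B (Real.exp (β * (n+1:ℕ))) ω))) ω := by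
    intro ω
    have hmemiff : (W ω, V ω) ∈ HS ↔ ω ∈ Aset B β (n+1) := by
      constructor
      · rintro ⟨h1, h2⟩ m hm
        rcases Nat.lt_or_ge m (n+1) with hmn | hmn
        · have hmn' : m ≤ n := by omega
          rw [← hsumW ω m hmn']
          exact h1 m hmn'
        · have : m = n+1 := by omega
          subst this
          rw [← hsumWV ω]
          exact h2
      · intro hA
        constructor
        · intro m hm
          rw [hsumW ω m hm]
          exact hA m (by omega)
        · rw [hsumWV ω]
          exact hA (n+1) le_rfl
    by_cases hA : ω ∈ Aset B β (n+1)
    · rw [Set.indicator_of_mem hA]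
      simp only [hHdef, Set.indicator_of_mem (hmemiff.2 hA)]
      rw [hsumWV ω]
    · rw [Set.indicator_of_notMem hA]
      simp only [hHdef, Set.indicator_of_notMem (fun hc => hA (hmemiff.1 hc))]
  -- the function G for the remaining integral
  set GS : Set (ℕ → ℝ) := {u | ∀ m : ℕ, m ≤ n → ∑ k ∈ Finset.range (m+1), u k ≤ 0} with hGSdef
  set G : (ℕ → ℝ) → ℝ≥0∞ := fun u => GS.indicator
      (fun u => ENNReal.ofReal (Real.exp (-θ' * ∑ k ∈ Finset.range (n+1), u k))) u with hGdef
  have hsummeas' : ∀ m : ℕ, Measurable (fun u : ℕ → ℝ => ∑ k ∈ Finset.range (m+1), u k) :=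
    fun m => Finset.measurable_sum _ (fun k _ => measurable_pi_apply k)
  have hGSmeas : MeasurableSet GS := by
    have : GS = ⋂ (m : ℕ) (_ : m ≤ n), {u : ℕ → ℝ | ∑ k ∈ Finset.range (m+1), u k ≤ 0} := by
      ext u; simp [hGSdef]
    rw [this]
    exact MeasurableSet.iInter fun m => MeasurableSet.iInter fun _ =>
      measurableSet_le (hsummeas' m) measurable_const
  have hGmeas : Measurable G := by
    apply Measurable.indicator _ hGSmeas
    exact ENNReal.measurable_ofReal.comp (Real.measurable_exp.comp
      (measurable_const.mul (hsummeas' n)))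
  -- inner bound
  have hinner : ∀ u : ℕ → ℝ, ∫⁻ y, H (u, y) ∂(gaussianReal 0 v)
      ≤ ENNReal.ofReal ((1/2) * Real.exp (θ^2 * (v:ℝ)/2 + (4/5)*θ*Real.sqrt (v:ℝ))) * G u := by
    intro u
    by_cases hu : u ∈ GS
    · set s : ℝ := ∑ k ∈ Finset.range (n+1), u k with hsdef
      have hs : s ≤ 0 := hu n le_rfl
      have hHy : ∀ y : ℝ, H (u, y)
          = (Iic (-s)).indicator (fun y => ENNReal.ofReal (Real.exp (-θ * (s + y)))) y := by
        intro y
        by_cases hy : y ∈ Iic (-s)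
        · have hmem : (u, y) ∈ HS := by
            refine ⟨hu, ?_⟩
            have h5 : y ≤ -s := hy
            show (∑ k ∈ Finset.range (n+1), u k) + y ≤ 0
            rw [← hsdef]
            linarith
          rw [Set.indicator_of_mem hy]
          simp only [hHdef, Set.indicator_of_mem hmem, ← hsdef]
        · have hmem : (u, y) ∉ HS := by
            intro hc
            have h6 : (∑ k ∈ Finset.range (n+1), u k) + y ≤ 0 := hc.2
            rw [← hsdef] at h6
            exact hy (by simp only [Set.mem_Iic]; linarith)
          rw [Set.indicator_of_notMem hy]
          simp only [hHdef, Set.indicator_of_notMem hmem]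
      rw [lintegral_congr hHy]
      refine (key_bound hv0 hθ hs).trans (le_of_eq ?_)
      simp only [hGdef, Set.indicator_of_mem hu, ← hsdef]
      rw [← ENNReal.ofReal_mul (by positivity), hθ'def]
    · have hHy : ∀ y : ℝ, H (u, y) = 0 := by
        intro y
        rw [hHdef]
        apply Set.indicator_of_notMem
        intro hc
        exact hu hc.1
      rw [lintegral_congr hHy, lintegral_zero]
      exact zero_le
  -- put everything together
  haveI : IsProbabilityMeasure (P.map W) := Measure.isProbabilityMeasure_map hWmeas.aemeasurable
  calc ∫⁻ ω, (Aset B β (n+1)).indicator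
        (fun ω => ENNReal.ofReal (Real.exp (-θ * B (Real.exp (β * (n+1:ℕ))) ω))) ω ∂P
      = ∫⁻ ω, H (W ω, V ω) ∂P := (lintegral_congr hpoint).symm
    _ = ∫⁻ p, H p ∂(P.map (fun ω => (W ω, V ω))) :=
        (lintegral_map hHmeas (hWmeas.prodMk hVmeas)).symm
    _ = ∫⁻ p, H p ∂((P.map W).prod (gaussianReal 0 v)) := by rw [hjoint]
    _ = ∫⁻ u, ∫⁻ y, H (u, y) ∂(gaussianReal 0 v) ∂(P.map W) :=
        lintegral_prod _ hHmeas.aemeasurable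
    _ ≤ ∫⁻ u, ENNReal.ofReal ((1/2) * Real.exp (θ^2 * (v:ℝ)/2 + (4/5)*θ*Real.sqrt (v:ℝ)))
          * G u ∂(P.map W) := lintegral_mono hinner
    _ = ENNReal.ofReal ((1/2) * Real.exp (θ^2 * (v:ℝ)/2 + (4/5)*θ*Real.sqrt (v:ℝ)))
          * ∫⁻ u, G u ∂(P.map W) := lintegral_const_mul _ hGmeas
    _ = ENNReal.ofReal ((1/2) * Real.exp (θ^2 * (v:ℝ)/2 + (4/5)*θ*Real.sqrt (v:ℝ)))
          * ∫⁻ ω, G (W ω) ∂P := by rw [lintegral_map hGmeas hWmeas]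
    _ = _ := by
        congr 1
        apply lintegral_congr
        intro ω
        have hmemiff : W ω ∈ GS ↔ ω ∈ Aset B β n := by
          constructor
          · intro h m hm
            rw [← hsumW ω m hm]
            exact h m hm
          · intro h m hm
            rw [hsumW ω m hm]
            exact h m hm
        by_cases hA : ω ∈ Aset B β n
        · rw [Set.indicator_of_mem hA]
          simp only [hGdef, Set.indicator_of_mem (hmemiff.2 hA)]
          rw [hsumW ω n le_rfl]
        · rw [Set.indicator_of_notMem hA]
          simp only [hGdef, Set.indicator_of_notMem (fun hc => hA (hmemiff.1 hc))]

end Step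

section Core

variable {Ω : Type*} [MeasurableSpace Ω] {P : Measure Ω} {B : ℝ → Ω → ℝ}

/-- `c(β) = e^{-β/2}/(1-e^{-β/2})`. -/
noncomputable def xx (b : ℝ) : ℝ := Real.exp (-b/2) / (1 - Real.exp (-b/2))

noncomputable def KK (b : ℝ) : ℝ :=
  Real.exp (-b/2) / ((1 - Real.exp (-b/2)) * Real.sqrt (1 - Real.exp (-b)))

noncomputable def Th (b : ℝ) (n : ℕ) : ℝ := (4/5) * Real.exp (-b/2)^n * KK b

noncomputable def CC (b : ℝ) : ℝ := Real.exp ((Th b 0)^2 / 2)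

lemma sqrt_exp' (a : ℝ) : Real.sqrt (Real.exp a) = Real.exp (a/2) := by
  rw [show Real.exp a = (Real.exp (a/2))^2 by rw [sq, ← Real.exp_add]; ring_nf]
  exact Real.sqrt_sq (Real.exp_nonneg _)

lemma core (hB : IsStandardBM P B) {β : ℝ} (hβ : 0 < β) (hx : xx β ≤ Real.log 2) (N : ℕ) :
    P (Aset B β N) ≤ ENNReal.ofReal (CC β * ((1/2) * Real.exp (xx β))^N) := by
  haveI := hB.isProb
  set ρ : ℝ := Real.exp (-β/2) with hρdef
  have hρ0 : 0 < ρ := Real.exp_pos _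
  have hρ1 : ρ < 1 := by
    rw [hρdef, Real.exp_lt_one_iff]; linarith
  have h1ρ : 0 < 1 - ρ := by linarith
  have hD : 0 < 1 - Real.exp (-β) := by
    have : Real.exp (-β) < 1 := by rw [Real.exp_lt_one_iff]; linarith
    linarith
  have hsD : 0 < Real.sqrt (1 - Real.exp (-β)) := Real.sqrt_pos.2 hD
  have hK : 0 < KK β := by
    rw [KK]
    exact div_pos hρ0 (mul_pos h1ρ hsD)
  have hxρ : xx β = ρ / (1 - ρ) := rfl
  have hx0 : 0 < xx β := by rw [hxρ]; exact div_pos hρ0 h1ρ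
  have hTh0 : ∀ n, 0 < Th β n := by
    intro n
    exact mul_pos (mul_pos (by norm_num) (pow_pos hρ0 n)) hK
  have hpow : ∀ k : ℕ, ρ^k = Real.exp (-(β*k)/2) := by
    intro k
    rw [hρdef, ← Real.exp_nat_mul]
    congr 1; ring
  have hvco : ∀ k : ℕ, ((ttim β (k+2) - ttim β (k+1)).toNNReal : ℝ)
      = Real.exp (β*(k+1:ℕ)) - Real.exp (β*(k:ℕ)) :=
    fun k => Real.coe_toNNReal _ (var_pos hβ (k+1)).le
  have hvexp : ∀ k : ℕ, Real.exp (β*(k+1:ℕ)) - Real.exp (β*(k:ℕ))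
      = Real.exp (β*(k+1:ℕ)) * (1 - Real.exp (-β)) := by
    intro k
    rw [mul_sub, mul_one, ← Real.exp_add]
    congr 2
    push_cast; ring
  have hsdv : ∀ k : ℕ, Real.sqrt ((ttim β (k+2) - ttim β (k+1)).toNNReal : ℝ)
      = Real.exp (β*(k+1:ℕ)/2) * Real.sqrt (1 - Real.exp (-β)) := by
    intro k
    rw [hvco k, hvexp k, Real.sqrt_mul (Real.exp_nonneg _), sqrt_exp']
  -- the inductive statement
  have Ind : ∀ (n : ℕ) (θ : ℝ), 0 ≤ θ → θ ≤ Th β n →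
      (∫⁻ ω, (Aset B β n).indicator
        (fun ω => ENNReal.ofReal (Real.exp (-θ * B (Real.exp (β * n)) ω))) ω ∂P)
      ≤ ENNReal.ofReal (CC β * ((1/2) * Real.exp (xx β))^n) := by
    intro n
    induction n with
    | zero =>
      intro θ hθ0 hθTh
      -- law of B(1)
      set f : Ω → ℝ := fun ω => B (ttim β 1) ω - B (ttim β 0) ω with hfdef
      have hfmeas : Measurable f := (hB.meas _).sub (hB.meas _)
      have hmapf : P.map f = gaussianReal 0 ((ttim β 1 - ttim β 0).toNNReal) :=
        hB.gauss _ _ (le_refl 0) (ttim_mono hβ (Nat.zero_le 1))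
      set v : NNReal := (ttim β 1 - ttim β 0).toNNReal with hvdef
      have hv0 : v ≠ 0 := by
        simp only [hvdef, ne_eq, Real.toNNReal_eq_zero, not_le]
        exact var_pos hβ 0
      have hvc : (v:ℝ) = 1 := by
        rw [hvdef, Real.coe_toNNReal _ (var_pos hβ 0).le]
        show Real.exp (β * (0:ℕ)) - 0 = 1
        simp
      have hpt : ∀ ω, (Aset B β 0).indicator
          (fun ω => ENNReal.ofReal (Real.exp (-θ * B (Real.exp (β * (0:ℕ))) ω))) ω
          = (Iic (0:ℝ)).indicator (fun y => ENNReal.ofReal (Real.exp (-θ * y))) (f ω) := by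
        intro ω
        have hf : f ω = B (Real.exp (β * (0:ℕ))) ω := by
          rw [hfdef]
          show B (ttim β 1) ω - B (ttim β 0) ω = _
          have h0 : ttim β 0 = 0 := rfl
          rw [h0, hB.start, sub_zero]
          rfl
        have hmem : ω ∈ Aset B β 0 ↔ f ω ∈ Iic (0:ℝ) := by
          rw [hf]
          constructor
          · intro h; exact h 0 le_rfl
          · intro h m hm
            have : m = 0 := by omega
            subst this; exact h
        by_cases hA : ω ∈ Aset B β 0
        · rw [Set.indicator_of_mem hA, Set.indicator_of_mem (hmem.1 hA), hf]
        · rw [Set.indicator_of_notMem hA, Set.indicator_of_notMem (fun hc => hA (hmem.2 hc))]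
      rw [lintegral_congr hpt]
      have hmeasF : Measurable fun y : ℝ =>
          (Iic (0:ℝ)).indicator (fun y => ENNReal.ofReal (Real.exp (-θ * y))) y := by
        apply Measurable.indicator _ measurableSet_Iic
        fun_prop
      calc ∫⁻ ω, (Iic (0:ℝ)).indicator (fun y => ENNReal.ofReal (Real.exp (-θ * y))) (f ω) ∂P
          = ∫⁻ y, (Iic (0:ℝ)).indicator (fun y => ENNReal.ofReal (Real.exp (-θ * y))) y
              ∂(P.map f) := (lintegral_map hmeasF hfmeas).symm
        _ = ENNReal.ofReal (Real.exp (θ^2 * v / 2)) * gaussianReal 0 v (Iic (0 + θ * v)) := by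
            rw [hmapf, tilt hv0 θ 0]
        _ ≤ ENNReal.ofReal (Real.exp (θ^2 * v / 2)) * 1 := by
            gcongr
            exact prob_le_one
        _ ≤ ENNReal.ofReal (CC β * ((1/2) * Real.exp (xx β))^0) := by
            rw [mul_one, pow_zero, mul_one, CC]
            apply ENNReal.ofReal_le_ofReal
            apply Real.exp_le_exp.2
            rw [hvc]
            have : θ ≤ Th β 0 := hθTh
            nlinarith [hTh0 0]
    | succ n ih =>
      intro θ hθ0 hθTh
      have hvrpos : (0:ℝ) < ((ttim β (n+2) - ttim β (n+1)).toNNReal : ℝ) := by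
        rw [hvco n, hvexp n]
        positivity
      set σ : ℝ := Real.sqrt ((ttim β (n+2) - ttim β (n+1)).toNNReal : ℝ) with hσdef
      have hσpos : 0 < σ := Real.sqrt_pos.2 hvrpos
      have hσval : σ = Real.exp (β*(n+1:ℕ)/2) * Real.sqrt (1 - Real.exp (-β)) := hsdv n
      have hρσ : ρ^(n+1) * Real.exp (β*(n+1:ℕ)/2) = 1 := by
        rw [hpow (n+1), ← Real.exp_add]
        push_cast
        rw [show -(β*(n+1:ℝ))/2 + β*(n+1:ℝ)/2 = 0 by ring, Real.exp_zero]
      -- new tilt parameter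
      set θ' : ℝ := θ + (4/5)/σ with hθ'def
      have hθ'0 : 0 ≤ θ' := by positivity
      have hE : (0:ℝ) < Real.exp (β*(n+1:ℕ)/2) := Real.exp_pos _
      have hKK : KK β = ρ/((1-ρ)*Real.sqrt (1 - Real.exp (-β))) := by
        rw [KK, ← hρdef]
      have hrec : Th β (n+1) + (4/5)/σ = Th β n := by
        have h1 : (4:ℝ)/5/σ = (4/5) * ρ^(n+1) / Real.sqrt (1 - Real.exp (-β)) := by
          rw [hσval, ← div_div]
          congr 1
          rw [div_eq_iff hE.ne', mul_assoc, hρσ, mul_one]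
        rw [h1, Th, Th, ← hρdef, hKK]
        field_simp
        ring
      have hθ'Th : θ' ≤ Th β n := by
        rw [hθ'def, ← hrec]
        linarith
      -- cost bound
      have hKD : KK β * Real.sqrt (1 - Real.exp (-β)) = ρ / (1-ρ) := by
        rw [hKK]
        field_simp
      have hwle : θ * σ ≤ (4/5) * xx β := by
        have h1 : Th β (n+1) * σ = (4/5) * xx β := by
          calc Th β (n+1) * σ
              = (4/5) * (ρ^(n+1) * Real.exp (β*(n+1:ℕ)/2))
                * (KK β * Real.sqrt (1 - Real.exp (-β))) := by
                rw [hσval, Th, ← hρdef]; ring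
            _ = (4/5) * xx β := by rw [hρσ, hKD, hxρ]; ring
        calc θ * σ ≤ Th β (n+1) * σ := by nlinarith
          _ = (4/5) * xx β := h1
      have hw0 : 0 ≤ θ * σ := by positivity
      have hlog : Real.log 2 < 0.6931471808 := Real.log_two_lt_d9
      have hcost : θ^2 * ((ttim β (n+2) - ttim β (n+1)).toNNReal : ℝ)/2 + (4/5)*θ*σ
          ≤ xx β := by
        have hσ2 : σ^2 = ((ttim β (n+2) - ttim β (n+1)).toNNReal : ℝ) :=
          Real.sq_sqrt hvrpos.le
        rw [← hσ2]
        have hxs : xx β ≤ 0.6931471808 := le_of_lt (lt_of_le_of_lt hx hlog)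
        nlinarith [hwle, hw0, hx0, sq_nonneg (θ*σ)]
      -- apply the step lemma and the inductive hypothesis
      refine (step hB hβ n hθ0).trans ?_
      rw [← hσdef, ← hθ'def]
      calc ENNReal.ofReal ((1/2) * Real.exp (θ^2 * ((ttim β (n+2) - ttim β (n+1)).toNNReal : ℝ)/2
              + (4/5)*θ*σ))
            * ∫⁻ ω, (Aset B β n).indicator
              (fun ω => ENNReal.ofReal (Real.exp (-θ' * B (Real.exp (β * n)) ω))) ω ∂P
          ≤ ENNReal.ofReal ((1/2) * Real.exp (xx β))
            * ENNReal.ofReal (CC β * ((1/2) * Real.exp (xx β))^n) := by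
            apply mul_le_mul'
            · apply ENNReal.ofReal_le_ofReal
              have := Real.exp_le_exp.2 hcost
              nlinarith [Real.exp_pos (xx β)]
            · exact ih θ' hθ'0 hθ'Th
        _ = ENNReal.ofReal (((1/2) * Real.exp (xx β)) * (CC β * ((1/2) * Real.exp (xx β))^n)) := by
            rw [← ENNReal.ofReal_mul (by positivity)]
        _ = ENNReal.ofReal (CC β * ((1/2) * Real.exp (xx β))^(n+1)) := by
            congr 1
            ring
  -- conclude
  have h0 : P (Aset B β N) = ∫⁻ ω, (Aset B β N).indicator
      (fun ω => ENNReal.ofReal (Real.exp (-(0:ℝ) * B (Real.exp (β * N)) ω))) ω ∂P := by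
    have : (fun ω => ENNReal.ofReal (Real.exp (-(0:ℝ) * B (Real.exp (β * N)) ω)))
        = fun _ => (1:ℝ≥0∞) := by
      funext ω; norm_num
    rw [this, lintegral_indicator (meas_Aset hB β N), setLIntegral_one]
  rw [h0]
  exact Ind N 0 le_rfl (hTh0 N).le

end Core

end BMaux

namespace BMaux

variable {Ω : Type*} [MeasurableSpace Ω] {P : Measure Ω} {B : ℝ → Ω → ℝ}

lemma survival_eq (β : ℝ) (N : ℕ) : expSurvival P B β N = (P (Aset B β N)).toReal := rfl

lemma survival_pos (hB : IsStandardBM P B) {β : ℝ} (hβ : 0 < β) (N : ℕ) :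
    0 < expSurvival P B β N := by
  haveI := hB.isProb
  rw [survival_eq]
  exact ENNReal.toReal_pos (pos_Aset hB hβ N).ne' (measure_ne_top P _)

lemma survival_le (hB : IsStandardBM P B) {β : ℝ} (hβ : 0 < β)
    (hx : xx β ≤ Real.log 2) (N : ℕ) :
    expSurvival P B β N ≤ CC β * ((1/2) * Real.exp (xx β))^N := by
  haveI := hB.isProb
  rw [survival_eq]
  have h := core hB hβ hx N
  calc (P (Aset B β N)).toReal
      ≤ (ENNReal.ofReal (CC β * ((1/2) * Real.exp (xx β))^N)).toReal :=
        ENNReal.toReal_mono ENNReal.ofReal_ne_top h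
    _ = CC β * ((1/2) * Real.exp (xx β))^N := ENNReal.toReal_ofReal
        (mul_nonneg (le_of_lt (Real.exp_pos _)) (by positivity))

lemma main_aux (hB : IsStandardBM P B) {β : ℝ} (hβ : 0 < β) (m : ℕ) (hm : 1 ≤ m)
    (hx : xx (β * (m:ℝ)) ≤ Real.log 2) :
    (((Real.log 2 - xx (β * (m:ℝ))) / (m:ℝ) : ℝ) : EReal) ≤ lamBeta P B β := by
  haveI := hB.isProb
  have hm0 : 0 < m := hm
  have hmR : (0:ℝ) < (m:ℝ) := by exact_mod_cast hm0
  have hβm : 0 < β * (m:ℝ) := mul_pos hβ hmR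
  set L : ℝ := Real.log 2 - xx (β * (m:ℝ)) with hLdef
  have hL0 : 0 ≤ L := by rw [hLdef]; linarith
  have hCC : 0 < CC (β * (m:ℝ)) := Real.exp_pos _
  have hq : 0 < (1/2) * Real.exp (xx (β * (m:ℝ))) := by positivity
  -- event inclusion
  have hsub : ∀ N : ℕ, Aset B β N ⊆ Aset B (β * (m:ℝ)) (N / m) := by
    intro N ω hω j hj
    have hcast : β * (m:ℝ) * (j:ℝ) = β * ((m*j : ℕ) : ℝ) := by push_cast; ring
    rw [hcast]
    apply hω (m*j)
    have := (Nat.le_div_iff_mul_le hm0).1 hj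
    rw [Nat.mul_comm]
    exact this
  have hple : ∀ N : ℕ, expSurvival P B β N
      ≤ CC (β * (m:ℝ)) * ((1/2) * Real.exp (xx (β * (m:ℝ))))^(N/m) := by
    intro N
    calc expSurvival P B β N = (P (Aset B β N)).toReal := rfl
      _ ≤ (P (Aset B (β * (m:ℝ)) (N/m))).toReal := by
          apply ENNReal.toReal_mono (measure_ne_top P _)
          exact measure_mono (hsub N)
      _ = expSurvival P B (β * (m:ℝ)) (N/m) := rfl
      _ ≤ _ := survival_le hB hβm hx (N/m)
  -- the lower-bounding real sequence
  set c : ℝ := Real.log (CC (β * (m:ℝ))) with hcdef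
  have hkey : ∀ N : ℕ, 1 ≤ N →
      -(c)/(N:ℝ) + (1/(m:ℝ) - 1/(N:ℝ)) * L
        ≤ -(1/(N:ℝ)) * Real.log (expSurvival P B β N) := by
    intro N hN
    have hNR : (0:ℝ) < (N:ℝ) := by exact_mod_cast hN
    have hlogp : Real.log (expSurvival P B β N)
        ≤ c + ((N/m : ℕ):ℝ) * Real.log ((1/2) * Real.exp (xx (β * (m:ℝ)))) := by
      have h1 := Real.log_le_log (survival_pos hB hβ N) (hple N)
      rwa [Real.log_mul hCC.ne' (by positivity), Real.log_pow, ← hcdef] at h1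
    have hlogq : Real.log ((1/2) * Real.exp (xx (β * (m:ℝ)))) = -L := by
      rw [Real.log_mul (by norm_num) (Real.exp_ne_zero _), Real.log_exp, one_div,
        Real.log_inv, hLdef]
      ring
    rw [hlogq] at hlogp
    set k : ℝ := ((N/m : ℕ):ℝ) with hkdef
    have hk0 : 0 ≤ k := by rw [hkdef]; positivity
    -- N ≤ m * (k + 1)
    have hNk : (N:ℝ) ≤ (m:ℝ) * (k + 1) := by
      have h2 : N < m * (N/m) + m := by
        have h3 := Nat.div_add_mod N m
        have h4 : N % m < m := Nat.mod_lt _ hm0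
        omega
      rw [hkdef]
      push_cast
      exact_mod_cast by push_cast; nlinarith [h2] 
    have hfrac : 1/(m:ℝ) - 1/(N:ℝ) ≤ k/(N:ℝ) := by
      rw [div_sub_div _ _ hmR.ne' hNR.ne', div_le_div_iff₀ (by positivity) hNR]
      nlinarith
    have hstep : -(1/(N:ℝ)) * (c + k * (-L)) ≤ -(1/(N:ℝ)) * Real.log (expSurvival P B β N) := by
      apply mul_le_mul_of_nonpos_left hlogp
      simp only [neg_nonpos]
      positivity
    calc -(c)/(N:ℝ) + (1/(m:ℝ) - 1/(N:ℝ)) * L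
        ≤ -(c)/(N:ℝ) + (k/(N:ℝ)) * L := by nlinarith
      _ = -(1/(N:ℝ)) * (c + k * (-L)) := by ring
      _ ≤ _ := hstep
  -- limit of the lower bound
  have hb : Tendsto (fun N : ℕ => -(c)/(N:ℝ) + (1/(m:ℝ) - 1/(N:ℝ)) * L) atTop
      (nhds (L / (m:ℝ))) := by
    have h1 : Tendsto (fun N : ℕ => 1/(N:ℝ)) atTop (nhds 0) :=
      tendsto_one_div_atTop_nhds_zero_nat
    have h2 : Tendsto (fun N : ℕ => -(c) * (1/(N:ℝ)) + (1/(m:ℝ) - 1/(N:ℝ)) * L) atTop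
        (nhds (-(c) * 0 + (1/(m:ℝ) - 0) * L)) :=
      ((tendsto_const_nhds.mul h1).add (((tendsto_const_nhds.sub h1)).mul tendsto_const_nhds))
    have h3 : -(c) * 0 + (1/(m:ℝ) - 0) * L = L / (m:ℝ) := by ring
    rw [h3] at h2
    have h4 : (fun N : ℕ => -(c)/(N:ℝ) + (1/(m:ℝ) - 1/(N:ℝ)) * L)
        = fun N : ℕ => -(c) * (1/(N:ℝ)) + (1/(m:ℝ) - 1/(N:ℝ)) * L := by
      funext N; ring
    rw [h4]
    exact h2
  -- pass to EReal limsup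
  have hev : ∀ᶠ (N : ℕ) in (atTop : Filter ℕ),
      ((-(c)/(N:ℝ) + (1/(m:ℝ) - 1/(N:ℝ)) * L : ℝ) : EReal)
        ≤ ((-(1/(N:ℝ)) * Real.log (expSurvival P B β N) : ℝ) : EReal) := by
    filter_upwards [eventually_ge_atTop 1] with N hN
    exact_mod_cast hkey N hN
  have hliminf : ((L / (m:ℝ) : ℝ) : EReal)
      ≤ Filter.liminf (fun N : ℕ =>
          ((-(1/(N:ℝ)) * Real.log (expSurvival P B β N) : ℝ) : EReal)) atTop := by
    have h5 : Filter.liminf (fun N : ℕ =>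
        ((-(c)/(N:ℝ) + (1/(m:ℝ) - 1/(N:ℝ)) * L : ℝ) : EReal)) atTop = ((L / (m:ℝ) : ℝ) : EReal) :=
      ((EReal.tendsto_coe.2 hb).liminf_eq)
    rw [← h5]
    exact Filter.liminf_le_liminf hev
  calc (((Real.log 2 - xx (β * (m:ℝ))) / (m:ℝ) : ℝ) : EReal)
      = ((L / (m:ℝ) : ℝ) : EReal) := by rw [hLdef]
    _ ≤ Filter.liminf (fun N : ℕ =>
          ((-(1/(N:ℝ)) * Real.log (expSurvival P B β N) : ℝ) : EReal)) atTop := hliminf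
    _ ≤ lamBeta P B β := Filter.liminf_le_limsup

lemma xx_le_log2 {b : ℝ} (hb : 2 * Real.log (1 + 1/Real.log 2) ≤ b) :
    xx b ≤ Real.log 2 := by
  have hL : 0 < Real.log 2 := Real.log_pos (by norm_num)
  have hinv : 0 < 1/Real.log 2 := by positivity
  have hc1 : (1:ℝ) < 1 + 1/Real.log 2 := by linarith
  have hr0b : Real.exp (-b/2) ≤ (1 + 1/Real.log 2)⁻¹ := by
    rw [show (1 + 1/Real.log 2)⁻¹ = Real.exp (- Real.log (1 + 1/Real.log 2)) by
      rw [Real.exp_neg, Real.exp_log (by linarith)]]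
    apply Real.exp_le_exp.2
    linarith
  set r : ℝ := Real.exp (-b/2) with hrdef
  set r₀ : ℝ := (1 + 1/Real.log 2)⁻¹ with hr₀def
  have hrpos : 0 < r := Real.exp_pos _
  have hr₀pos : 0 < r₀ := by rw [hr₀def]; positivity
  have hr₀1 : r₀ < 1 := by
    rw [hr₀def]
    exact inv_lt_one_of_one_lt₀ hc1
  have hr1 : r < 1 := lt_of_le_of_lt hr0b hr₀1
  have h1r : 0 < 1 - r := by linarith
  have h1r₀ : 0 < 1 - r₀ := by linarith
  have hratio : r/(1-r) ≤ r₀/(1-r₀) := by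
    rw [div_le_div_iff₀ h1r h1r₀]
    nlinarith [hr0b]
  have hval : r₀/(1-r₀) = Real.log 2 := by
    rw [hr₀def]
    rw [div_eq_iff (by
      rw [← hr₀def]; exact h1r₀.ne')]
    field_simp
    ring
  calc xx b = r/(1-r) := rfl
    _ ≤ r₀/(1-r₀) := hratio
    _ = Real.log 2 := hval

end BMaux

/-- Lower bounds for `λ_β`: with `c(x) = e^{-x/2}/(1 - e^{-x/2})` and
`β₀ = 2 log(1 + 1/log 2)`, one has `λ_β ≥ log 2 - c(β)` for `β > β₀`, and
`λ_β ≥ (log 2 - c(βm))/m` with `m = ⌈β₀/β⌉` for `β ∈ (0, β₀]`. -/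
theorem lamBeta_lower_bounds
    {Ω : Type*} [MeasurableSpace Ω] (P : Measure Ω) (B : ℝ → Ω → ℝ)
    (hB : IsStandardBM P B) (β : ℝ) (hβ : 0 < β) :
    (2 * Real.log (1 + 1 / Real.log 2) < β →
      ((Real.log 2 - Real.exp (-β / 2) / (1 - Real.exp (-β / 2)) : ℝ) : EReal) ≤
        lamBeta P B β) ∧
    (β ≤ 2 * Real.log (1 + 1 / Real.log 2) →
      ∀ m : ℕ, m = ⌈2 * Real.log (1 + 1 / Real.log 2) / β⌉₊ →
        (((Real.log 2 -
            Real.exp (-(β * m) / 2) / (1 - Real.exp (-(β * m) / 2))) / m : ℝ) : EReal) ≤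
          lamBeta P B β) := by
  constructor
  · intro h1
    have hx1 : BMaux.xx (β * ((1:ℕ):ℝ)) ≤ Real.log 2 := by
      apply BMaux.xx_le_log2
      push_cast
      linarith
    have h := BMaux.main_aux hB hβ 1 le_rfl hx1
    have heq : ((Real.log 2 - BMaux.xx (β * ((1:ℕ):ℝ))) / ((1:ℕ):ℝ) : ℝ)
        = Real.log 2 - Real.exp (-β / 2) / (1 - Real.exp (-β / 2)) := by
      have : BMaux.xx (β * ((1:ℕ):ℝ)) = Real.exp (-β / 2) / (1 - Real.exp (-β / 2)) := by
        rw [BMaux.xx]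
        norm_num
      rw [this]
      norm_num
    rw [heq] at h
    exact h
  · intro h2 m hm
    have hβ₀pos : 0 < 2 * Real.log (1 + 1 / Real.log 2) := by
      have hL : 0 < Real.log 2 := Real.log_pos (by norm_num)
      have : 0 < Real.log (1 + 1/Real.log 2) := Real.log_pos (by
        have : 0 < 1/Real.log 2 := by positivity
        linarith)
      linarith
    have hm1 : 1 ≤ m := by
      rw [hm]
      rw [Nat.one_le_ceil_iff]
      positivity
    have hβm : 2 * Real.log (1 + 1 / Real.log 2) ≤ β * (m:ℝ) := by
      have hc := Nat.le_ceil (2 * Real.log (1 + 1 / Real.log 2) / β)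
      rw [← hm] at hc
      rw [div_le_iff₀ hβ] at hc
      linarith [hc]
    have hx : BMaux.xx (β * (m:ℝ)) ≤ Real.log 2 := BMaux.xx_le_log2 hβm
    exact BMaux.main_aux hB hβ m hm1 hx
end

section
/- Let c(β) := e^{−β/2}/(1 − e^{−β/2}) and β₀ := 2 log(1 + 1/log 2). Then for every β > β₀ and every N ∈ ℕ, P( sup_{n=0,…,N} B(e^{β n}) ≤ 0 ) ≤ (1/2) exp( −(log 2 − c(β)) N ). (Note that c(β) ∈ (0, log 2) for β > β₀.) -/
open MeasureTheory ProbabilityTheory Filter Real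

open NNReal ENNReal

noncomputable def bmW (β : ℝ) : ℕ → ℝ
  | 0 => 4/5
  | (n+1) => 4/5 * Real.exp (β * (n+1:ℕ)) / Real.sqrt (Real.exp (β * (n+1:ℕ)) - Real.exp (β * (n:ℕ)))
      + bmW β n

noncomputable def bmD (β : ℝ) : ℕ → ℝ
  | 0 => 0
  | (n+1) => bmD β n
      + (16/25) * Real.exp (β * (n:ℕ)) / (2 * (Real.exp (β * (n+1:ℕ)) - Real.exp (β * (n:ℕ))))
      + (4/5) * bmW β n / Real.sqrt (Real.exp (β * (n+1:ℕ)) - Real.exp (β * (n:ℕ)))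


lemma complete_sq (v : ℝ≥0) (θ x : ℝ) (hv : 0 < (v:ℝ)) :
    Real.exp (-θ * x) * gaussianPDFReal 0 v x
      = Real.exp (θ^2 * v / 2) * gaussianPDFReal (-θ * v) v x := by
  simp only [gaussianPDFReal]
  rw [mul_left_comm, mul_left_comm (Real.exp _), ← Real.exp_add, ← Real.exp_add]
  congr 1
  field_simp
  ring

lemma gauss_Iic_zero (v : ℝ≥0) (hv : v ≠ 0) : gaussianReal 0 v (Set.Iic 0) = 1/2 := by
  have hmap : (gaussianReal 0 v).map (fun x : ℝ => -1 * x) = gaussianReal 0 v := by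
    rw [show (fun x : ℝ => -1 * x) = ((-1 : ℝ) * ·) from rfl, gaussianReal_map_const_mul]
    norm_num
  have h1 : gaussianReal 0 v (Set.Iic 0) = gaussianReal 0 v (Set.Ici 0) := by
    conv_rhs => rw [← hmap]
    rw [Measure.map_apply (by fun_prop) measurableSet_Ici]
    congr 1
    ext x
    simp
  have h0 : gaussianReal 0 v {(0:ℝ)} = 0 := by
    refine (gaussianReal_absolutelyContinuous 0 hv) ?_
    simp
  have hsum : gaussianReal 0 v (Set.Iic 0) + gaussianReal 0 v (Set.Ioi 0) = 1 := by
    rw [← measure_union (by simp [Set.disjoint_left]) measurableSet_Ioi]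
    simp [Set.Iic_union_Ioi]
  have hIci : gaussianReal 0 v (Set.Ici 0) = gaussianReal 0 v (Set.Ioi 0) := by
    rw [← Set.Ioi_union_left, measure_union (by simp) (by simp), h0, add_zero]
  rw [h1, hIci] at hsum ⊢
  have := hsum
  -- 2 * x = 1
  have hfin : gaussianReal 0 v (Set.Ioi 0) ≠ ⊤ := measure_ne_top _ _
  rw [← two_mul] at this
  rw [ENNReal.eq_div_iff (by norm_num) (by norm_num)]
  rw [mul_comm] at this ⊢
  convert this using 2

lemma gauss_key (v : ℝ≥0) (hv : 0 < (v:ℝ)) (θ r : ℝ) (hθ : 0 ≤ θ) (hr : 0 ≤ r) :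
    ∫⁻ x, (Set.Iic r).indicator (fun x => ENNReal.ofReal (Real.exp (-θ * x))) x
        ∂(gaussianReal 0 v)
      ≤ ENNReal.ofReal ((1/2) * Real.exp (θ^2 * v/2
          + (4/5) * (r / Real.sqrt v + θ * Real.sqrt v))) := by
  have hv0 : v ≠ 0 := by simpa using hv.ne'
  have hmeas : Measurable fun x : ℝ => ENNReal.ofReal (Real.exp (-θ * x)) := by fun_prop
  rw [lintegral_indicator measurableSet_Iic]
  rw [gaussianReal_of_var_ne_zero _ hv0,
    MeasureTheory.setLIntegral_withDensity_eq_setLIntegral_mul _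
      (measurable_gaussianPDF _ _) hmeas measurableSet_Iic]
  have hpt : ∀ x : ℝ, gaussianPDF 0 v x * ENNReal.ofReal (Real.exp (-θ * x))
      = ENNReal.ofReal (Real.exp (θ^2 * v / 2)) * gaussianPDF (-θ * v) v x := by
    intro x
    rw [gaussianPDF, gaussianPDF, ← ENNReal.ofReal_mul (gaussianPDFReal_nonneg _ _ _),
      ← ENNReal.ofReal_mul (Real.exp_nonneg _)]
    rw [mul_comm (gaussianPDFReal 0 v x), complete_sq v θ x hv]
  simp only [Pi.mul_apply, hpt]
  rw [lintegral_const_mul _ (measurable_gaussianPDF _ _)]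
  have hcdf : ∫⁻ x in Set.Iic r, gaussianPDF (-θ * v) v x
      = gaussianReal 0 v (Set.Iic (r + θ * v)) := by
    rw [← gaussianReal_apply _ hv0]
    have hmap : (gaussianReal 0 v).map (· + (-θ * v)) = gaussianReal (-θ * v) v := by
      rw [gaussianReal_map_add_const]; rw [zero_add]
    rw [← hmap, Measure.map_apply (by fun_prop) measurableSet_Iic]
    congr 1
    ext x
    simp only [Set.mem_preimage, Set.mem_Iic]
    constructor <;> intro h <;> linarith
  rw [hcdf]
  -- bound the cdf
  set u := r + θ * v with hu
  have hu0 : 0 ≤ u := by positivity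
  have hsplit : gaussianReal 0 v (Set.Iic u)
      ≤ 1/2 + ENNReal.ofReal (u * (Real.sqrt (2 * π * v))⁻¹) := by
    have : Set.Iic u ⊆ Set.Iic 0 ∪ Set.Ioc 0 u := by
      intro x hx
      rcases le_or_gt x 0 with h | h
      · exact Or.inl h
      · exact Or.inr ⟨h, hx⟩
    refine (measure_mono this).trans ?_
    refine (measure_union_le _ _).trans ?_
    gcongr
    · exact (gauss_Iic_zero v hv0).le
    · have hb : ∀ x : ℝ, gaussianPDF 0 v x ≤ ENNReal.ofReal ((Real.sqrt (2 * π * v))⁻¹) := by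
        intro x
        rw [gaussianPDF]
        apply ENNReal.ofReal_le_ofReal
        rw [gaussianPDFReal]
        nth_rewrite 2 [← mul_one ((Real.sqrt (2 * π * v))⁻¹)]
        have hexp1 : Real.exp (-(x - 0)^2/(2*(v:ℝ))) ≤ 1 := by
          rw [Real.exp_le_one_iff]
          apply div_nonpos_of_nonpos_of_nonneg (neg_nonpos.mpr (sq_nonneg _)) (by positivity)
        gcongr
      calc gaussianReal 0 v (Set.Ioc 0 u) = ∫⁻ x in Set.Ioc 0 u, gaussianPDF 0 v x := by
              rw [gaussianReal_apply _ hv0]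
        _ ≤ ∫⁻ _x in Set.Ioc 0 u, ENNReal.ofReal ((Real.sqrt (2 * π * v))⁻¹) := by
              exact setLIntegral_mono (by fun_prop) (fun x _ => hb x)
        _ = ENNReal.ofReal ((Real.sqrt (2 * π * v))⁻¹) * volume (Set.Ioc 0 u) := by
              rw [setLIntegral_const]
        _ = ENNReal.ofReal (u * (Real.sqrt (2 * π * v))⁻¹) := by
              rw [Real.volume_Ioc, sub_zero, ← ENNReal.ofReal_mul (by positivity), mul_comm]
  refine (mul_le_mul_right hsplit _).trans ?_
  -- now pure real arithmetic in ENNReal.ofReal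
  have h2 : (1/2 : ℝ≥0∞) = ENNReal.ofReal (1/2) := by
    rw [ENNReal.ofReal_div_of_pos two_pos, ENNReal.ofReal_one, ENNReal.ofReal_ofNat, one_div]
  rw [h2, ← ENNReal.ofReal_add (by norm_num) (by positivity),
    ← ENNReal.ofReal_mul (Real.exp_nonneg _)]
  apply ENNReal.ofReal_le_ofReal
  -- real inequality
  have hsv : 0 < Real.sqrt v := Real.sqrt_pos.mpr hv
  have hsqrt2pi : Real.sqrt (2*π*v) = Real.sqrt (2*π) * Real.sqrt v := by
    rw [← Real.sqrt_mul (by positivity)]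
  have h52 : (5/2 : ℝ) ≤ Real.sqrt (2 * π) := by
    have : (25/4 : ℝ) ≤ 2 * π := by nlinarith [Real.pi_gt_d6]
    nlinarith [Real.sq_sqrt (show (0:ℝ) ≤ 2*π by positivity),
      Real.sqrt_nonneg (2*π)]
  have hkey : u * (Real.sqrt (2*π*v))⁻¹ ≤ (2/5) * (u / Real.sqrt v) := by
    rw [hsqrt2pi]
    rw [div_eq_mul_inv]
    rw [mul_inv]
    have h1 : (Real.sqrt (2*π))⁻¹ ≤ 2/5 := by
      rw [inv_le_comm₀ (by positivity) (by norm_num)]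
      linarith
    calc u * ((Real.sqrt (2*π))⁻¹ * (Real.sqrt v)⁻¹)
        ≤ u * ((2/5) * (Real.sqrt v)⁻¹) := by gcongr
      _ = (2/5) * (u * (Real.sqrt v)⁻¹) := by ring
  have hexp : 1/2 + (2/5) * (u / Real.sqrt v) ≤ (1/2) * Real.exp ((4/5) * (u / Real.sqrt v)) := by
    have := Real.add_one_le_exp ((4/5) * (u / Real.sqrt v))
    nlinarith
  have huexp : (4/5 : ℝ) * (u / Real.sqrt v) = (4/5) * (r / Real.sqrt v + θ * Real.sqrt v) := by
    rw [hu]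
    have : (θ * v) / Real.sqrt v = θ * Real.sqrt v := by
      rw [mul_div_assoc, Real.div_sqrt]
    rw [add_div, this]
  calc Real.exp (θ^2 * v/2) * (1/2 + u * (Real.sqrt (2*π*v))⁻¹)
      ≤ Real.exp (θ^2 * v/2) * (1/2 + (2/5) * (u / Real.sqrt v)) := by
        gcongr
    _ ≤ Real.exp (θ^2 * v/2) * ((1/2) * Real.exp ((4/5) * (u / Real.sqrt v))) := by
        gcongr
    _ = (1/2) * Real.exp (θ^2 * v/2 + (4/5) * (u / Real.sqrt v)) := by
        rw [Real.exp_add]; ring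
    _ = (1/2) * Real.exp (θ^2 * v/2 + (4/5) * (r / Real.sqrt v + θ * Real.sqrt v)) := by
        rw [huexp]

lemma gauss_key' (v θ r : ℝ) (hv : 0 < v) (hθ : 0 ≤ θ) (hr : 0 ≤ r) :
    ∫⁻ x, (Set.Iic r).indicator (fun x => ENNReal.ofReal (Real.exp (-θ * x))) x
        ∂(gaussianReal 0 (Real.toNNReal v))
      ≤ ENNReal.ofReal ((1/2) * Real.exp (θ^2 * v/2
          + (4/5) * (r / Real.sqrt v + θ * Real.sqrt v))) := by
  have hv' : (0:ℝ) < ((Real.toNNReal v : ℝ≥0) : ℝ) := by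
    rw [Real.coe_toNNReal v hv.le]; exact hv
  have h := gauss_key (Real.toNNReal v) hv' θ r hθ hr
  rwa [Real.coe_toNNReal v hv.le] at h

lemma indep_VX {Ω : Type*} [MeasurableSpace Ω] {P : Measure Ω} {B : ℝ → Ω → ℝ}
    (hB : IsStandardBM P B) {β : ℝ} (hβ : 0 < β) (N : ℕ) :
    IndepFun (fun ω (i : Fin (N+1)) => B (Real.exp (β * (i:ℕ))) ω)
      (fun ω => B (Real.exp (β * (N+1:ℕ))) ω - B (Real.exp (β * (N:ℕ))) ω) P := by
  classical
  set tf : ℕ → ℝ := fun i => if i = 0 then 0 else Real.exp (β * (i - 1 : ℕ)) with htf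
  have htf_nonneg : ∀ i, 0 ≤ tf i := by
    intro i; simp only [tf]; split <;> positivity
  have htf_mono : Monotone tf := by
    intro i j hij
    match i, j with
    | 0, j =>
      have h0 : tf 0 = 0 := by simp [tf]
      rw [h0]; exact htf_nonneg j
    | (i+1), (j+1) =>
      simp only [tf, Nat.succ_ne_zero, if_false, Nat.add_sub_cancel]
      have : (i:ℝ) ≤ j := by exact_mod_cast Nat.succ_le_succ_iff.mp hij
      exact Real.exp_le_exp.mpr (by nlinarith)
    | (i+1), 0 => omega
  have hI := hB.indep (N+2) tf htf_mono htf_nonneg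
  set Z : Fin (N+2) → Ω → ℝ := fun i ω => B (tf (i + 1)) ω - B (tf i) ω with hZ
  have hZmeas : ∀ i, Measurable (Z i) := fun i => (hB.meas _).sub (hB.meas _)
  set S : Finset (Fin (N+2)) := Finset.univ.filter (fun i : Fin (N+2) => (i:ℕ) < N+1) with hS
  set T : Finset (Fin (N+2)) := {Fin.last (N+1)} with hT
  have hST : Disjoint S T := by
    rw [Finset.disjoint_right]
    intro i hi
    simp only [hT, Finset.mem_singleton] at hi
    simp [hS, hi, Fin.val_last]
  have hind := hI.indepFun_finset S T hST hZmeas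
  -- now compose
  set g' : ((i : S) → ℝ) → ℕ → ℝ := fun g k =>
    if h : k < N+1 then g ⟨⟨k, by omega⟩, by simp only [hS, Finset.mem_filter, Finset.mem_univ, true_and]; omega⟩ else 0 with hg'
  set φ : ((i : S) → ℝ) → (Fin (N+1) → ℝ) := fun g i =>
    ∑ k ∈ Finset.range ((i:ℕ)+1), g' g k with hφ
  set ψ : ((i : T) → ℝ) → ℝ := fun g => g ⟨Fin.last (N+1), by simp [hT]⟩ with hψ
  have hφmeas : Measurable φ := by
    apply measurable_pi_lambda
    intro i
    apply Finset.measurable_sum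
    intro k _
    simp only [hg']
    split
    · exact measurable_pi_apply _
    · exact measurable_const
  have hψmeas : Measurable ψ := measurable_pi_apply _
  have hVeq : (fun ω (i : Fin (N+1)) => B (Real.exp (β * (i:ℕ))) ω)
      = φ ∘ (fun a (i : S) => Z i a) := by
    funext ω
    funext i
    simp only [Function.comp_apply, hφ]
    have hterm : ∀ k ∈ Finset.range ((i:ℕ)+1),
        g' (fun j : S => Z j ω) k = B (tf (k+1)) ω - B (tf k) ω := by
      intro k hk
      simp only [Finset.mem_range] at hk
      have hkN : k < N + 1 := by omega
      simp only [hg', dif_pos hkN]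
      rfl
    rw [Finset.sum_congr rfl hterm, Finset.sum_range_sub (fun k => B (tf k) ω)]
    have h0 : tf 0 = 0 := by simp [tf]
    have h1 : tf ((i:ℕ)+1) = Real.exp (β * (i:ℕ)) := by
      simp [tf]
    rw [h0, h1, hB.start ω, sub_zero]
  have hXeq : (fun ω => B (Real.exp (β * (N+1:ℕ))) ω - B (Real.exp (β * (N:ℕ))) ω)
      = ψ ∘ (fun a (i : T) => Z i a) := by
    funext ω
    simp only [Function.comp_apply, hψ, hZ]
    have h1 : tf ((Fin.last (N+1) : Fin (N+2)) + 1 : ℕ) = Real.exp (β * (N+1:ℕ)) := by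
      simp [tf, Fin.val_last]
    have h2 : tf ((Fin.last (N+1) : Fin (N+2)) : ℕ) = Real.exp (β * (N:ℕ)) := by
      simp [tf, Fin.val_last]
    rw [h1, h2]
  rw [hVeq, hXeq]
  exact hind.comp hφmeas hψmeas

lemma bm_main {Ω : Type*} [MeasurableSpace Ω] {P : Measure Ω} {B : ℝ → Ω → ℝ}
    (hB : IsStandardBM P B) {β : ℝ} (hβ : 0 < β) (N : ℕ) :
    ∀ θ : ℝ, 0 ≤ θ →
    ∫⁻ ω, ({ω : Ω | ∀ n : ℕ, n ≤ N → B (Real.exp (β * n)) ω ≤ 0}).indicator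
        (fun ω => ENNReal.ofReal (Real.exp (-θ * B (Real.exp (β * N)) ω))) ω ∂P
      ≤ ENNReal.ofReal ((1/2)^(N+1)
          * Real.exp (θ^2 * Real.exp (β * N) / 2 + θ * bmW β N + bmD β N)) := by
  have hprob := hB.isProb
  induction N with
  | zero =>
    intro θ hθ
    have hlaw1 : Measure.map (fun ω => B (Real.exp (β * (0:ℕ))) ω) P
        = gaussianReal 0 (Real.toNNReal 1) := by
      have h := hB.gauss 0 1 le_rfl zero_le_one
      have heq : (fun ω => B 1 ω - B 0 ω) = fun ω => B (Real.exp (β * (0:ℕ))) ω := by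
        funext ω; rw [hB.start ω, sub_zero]; norm_num
      rw [heq] at h
      rw [h]
      norm_num
    have hev : {ω : Ω | ∀ n : ℕ, n ≤ 0 → B (Real.exp (β * n)) ω ≤ 0}
        = {ω : Ω | B (Real.exp (β * (0:ℕ))) ω ≤ 0} := by
      ext ω; simp only [Set.mem_setOf_eq]
      constructor
      · intro h; exact h 0 le_rfl
      · intro h n hn; interval_cases n; exact h
    rw [hev]
    have hpt : ∀ ω : Ω, ({ω : Ω | B (Real.exp (β * (0:ℕ))) ω ≤ 0}).indicator
        (fun ω => ENNReal.ofReal (Real.exp (-θ * B (Real.exp (β * (0:ℕ))) ω))) ω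
        = (Set.Iic (0:ℝ)).indicator (fun x => ENNReal.ofReal (Real.exp (-θ * x)))
            (B (Real.exp (β * (0:ℕ))) ω) := by
      intro ω
      simp only [Set.indicator_apply, Set.mem_setOf_eq, Set.mem_Iic]
    simp only [hpt]
    have hfmeas : Measurable fun x : ℝ =>
        (Set.Iic (0:ℝ)).indicator (fun x => ENNReal.ofReal (Real.exp (-θ * x))) x :=
      ((measurable_const.mul measurable_id).exp.ennreal_ofReal).indicator measurableSet_Iic
    have hmap := lintegral_map (μ := P) hfmeas (hB.meas (Real.exp (β * (0:ℕ))))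
    rw [← hmap, show Measure.map (B (Real.exp (β * (0:ℕ)))) P
      = gaussianReal 0 (Real.toNNReal 1) from hlaw1]
    refine (gauss_key' 1 θ 0 one_pos hθ le_rfl).trans ?_
    apply ENNReal.ofReal_le_ofReal
    apply le_of_eq
    simp only [Real.sqrt_one, bmW, bmD, Nat.cast_zero, mul_zero, Real.exp_zero]
    rw [pow_one]
    ring_nf
  | succ N ih =>
    intro θ hθ
    classical
    set s : ℝ := Real.exp (β * (N:ℕ)) with hs
    set t : ℝ := Real.exp (β * (N+1:ℕ)) with ht
    have hs0 : 0 < s := Real.exp_pos _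
    have hst : s < t := by
      rw [hs, ht]; apply Real.exp_lt_exp.mpr; push_cast; nlinarith
    have hv : (0:ℝ) < t - s := by linarith
    set u : ℝ := Real.sqrt (t - s) with hu
    have hu0 : 0 < u := Real.sqrt_pos.mpr hv
    have huv : u * u = t - s := Real.mul_self_sqrt hv.le
    set θ' : ℝ := θ + (4/5)/u with hθ'def
    have hθ'0 : 0 ≤ θ' := by positivity
    set V : Ω → (Fin (N+1) → ℝ) := fun ω (i : Fin (N+1)) => B (Real.exp (β * (i:ℕ))) ω with hV
    set X : Ω → ℝ := fun ω => B t ω - B s ω with hX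
    have hVmeas : Measurable V := measurable_pi_lambda _ (fun i => hB.meas _)
    have hXmeas : Measurable X := (hB.meas _).sub (hB.meas _)
    have hVX : IndepFun V X P := indep_VX hB hβ N
    have hlawX : Measure.map X P = gaussianReal 0 (Real.toNNReal (t - s)) :=
      hB.gauss s t hs0.le hst.le
    have hprod : Measure.map (fun ω => (V ω, X ω)) P
        = (Measure.map V P).prod (Measure.map X P) :=
      (indepFun_iff_map_prod_eq_prod_map_map hVmeas.aemeasurable hXmeas.aemeasurable).mp hVX
    have hmapV : IsProbabilityMeasure (Measure.map V P) :=
      Measure.isProbabilityMeasure_map hVmeas.aemeasurable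
    set L : Fin (N+1) := Fin.last N with hL
    set G : ((Fin (N+1) → ℝ) × ℝ) → ℝ≥0∞ := fun p =>
      if (∀ i, p.1 i ≤ 0) ∧ p.1 L + p.2 ≤ 0
      then ENNReal.ofReal (Real.exp (-θ * (p.1 L + p.2))) else 0 with hG
    have hsetG : MeasurableSet {p : (Fin (N+1) → ℝ) × ℝ | (∀ i, p.1 i ≤ 0) ∧ p.1 L + p.2 ≤ 0} := by
      have hEq : {p : (Fin (N+1) → ℝ) × ℝ | (∀ i, p.1 i ≤ 0) ∧ p.1 L + p.2 ≤ 0}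
          = (⋂ i, {p : (Fin (N+1) → ℝ) × ℝ | p.1 i ≤ 0}) ∩ {p | p.1 L + p.2 ≤ 0} := by
        ext p; simp [Set.mem_iInter]
      rw [hEq]
      refine MeasurableSet.inter (MeasurableSet.iInter fun i => ?_) ?_
      · exact measurableSet_le (measurable_fst.eval) measurable_const
      · exact measurableSet_le ((measurable_fst.eval).add measurable_snd) measurable_const
    have hGmeas : Measurable G := by
      rw [hG]
      exact Measurable.ite hsetG
        (by fun_prop) measurable_const
    have hBt : ∀ ω, V ω L + X ω = B t ω := by
      intro ω
      rw [hV, hX, hL]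
      simp only [Fin.val_last]
      rw [← hs]
      ring
    have hmem : ∀ ω, (ω ∈ {ω : Ω | ∀ n : ℕ, n ≤ N+1 → B (Real.exp (β * n)) ω ≤ 0})
        ↔ ((∀ i : Fin (N+1), V ω i ≤ 0) ∧ V ω L + X ω ≤ 0) := by
      intro ω
      rw [hBt ω]
      simp only [Set.mem_setOf_eq, hV]
      constructor
      · intro h
        refine ⟨fun i => h i (by omega), h (N+1) le_rfl⟩
      · rintro ⟨h1, h2⟩ n hn
        rcases Nat.lt_or_ge n (N+1) with hlt | hge
        · exact h1 ⟨n, hlt⟩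
        · have hn2 : n = N+1 := by omega
          subst hn2
          exact h2
    have hpt : ∀ ω : Ω, ({ω : Ω | ∀ n : ℕ, n ≤ N+1 → B (Real.exp (β * n)) ω ≤ 0}).indicator
        (fun ω => ENNReal.ofReal (Real.exp (-θ * B t ω))) ω = G (V ω, X ω) := by
      intro ω
      by_cases h : (∀ i : Fin (N+1), V ω i ≤ 0) ∧ V ω L + X ω ≤ 0
      · rw [Set.indicator_of_mem ((hmem ω).mpr h), hG]
        simp only
        rw [if_pos h, hBt ω]
      · rw [Set.indicator_of_notMem (fun hc => h ((hmem ω).mp hc)), hG]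
        simp only
        rw [if_neg h]
    set K : ℝ := (1/2) * Real.exp (θ^2*(t-s)/2 + (4/5)*(θ*u)) with hK
    set ind : (Fin (N+1) → ℝ) → ℝ≥0∞ := fun y =>
      ({y : Fin (N+1) → ℝ | ∀ i, y i ≤ 0}).indicator
        (fun y => ENNReal.ofReal (Real.exp (-θ' * y L))) y with hind
    have hindmeas : Measurable ind := by
      rw [hind]
      refine Measurable.indicator (by fun_prop) ?_
      have : {y : Fin (N+1) → ℝ | ∀ i, y i ≤ 0} = ⋂ i, {y : Fin (N+1) → ℝ | y i ≤ 0} := by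
        ext y; simp [Set.mem_iInter]
      rw [this]
      exact MeasurableSet.iInter fun i => measurableSet_le (measurable_pi_apply i) measurable_const
    set H : (Fin (N+1) → ℝ) → ℝ≥0∞ := fun y => ENNReal.ofReal K * ind y with hH
    have hinner : ∀ y : Fin (N+1) → ℝ,
        ∫⁻ x, G (y, x) ∂(gaussianReal 0 (Real.toNNReal (t - s))) ≤ H y := by
      intro y
      by_cases hy : ∀ i, y i ≤ 0
      · have hyL : y L ≤ 0 := hy L
        have hr : 0 ≤ -(y L) := by linarith
        have hGy : ∀ x : ℝ, G (y, x) = ENNReal.ofReal (Real.exp (-θ * y L)) *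
            (Set.Iic (-(y L))).indicator (fun x => ENNReal.ofReal (Real.exp (-θ * x))) x := by
          intro x
          rw [hG]
          simp only
          by_cases hx : y L + x ≤ 0
          · rw [if_pos ⟨hy, hx⟩, Set.indicator_of_mem (by rw [Set.mem_Iic]; linarith)]
            rw [← ENNReal.ofReal_mul (Real.exp_nonneg _), ← Real.exp_add]
            congr 2
            ring
          · rw [if_neg (fun hc => hx hc.2), Set.indicator_of_notMem
              (by simp only [Set.mem_Iic, not_le]; push_neg at hx; linarith), mul_zero]
        simp only [hGy]
        have hiic : Measurable fun x : ℝ =>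
            (Set.Iic (-(y L))).indicator (fun x => ENNReal.ofReal (Real.exp (-θ * x))) x :=
          ((measurable_const.mul measurable_id).exp.ennreal_ofReal).indicator measurableSet_Iic
        rw [lintegral_const_mul _ hiic]
        refine le_trans (mul_le_mul_right (gauss_key' (t - s) θ (-(y L)) hv hθ hr) _) ?_
        rw [hH, hind]
        beta_reduce
        rw [Set.indicator_of_mem (show y ∈ {y : Fin (N+1) → ℝ | ∀ i, y i ≤ 0} from hy)]
        rw [← ENNReal.ofReal_mul (Real.exp_nonneg _), ← ENNReal.ofReal_mul (by rw [hK]; positivity)]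
        apply le_of_eq
        congr 1
        rw [hK, ← hu]
        rw [mul_left_comm, ← Real.exp_add, mul_assoc, ← Real.exp_add]
        congr 1
        rw [hθ'def]
        field_simp
        ring
      · have hG0 : ∀ x:ℝ, G (y,x) = 0 := by
          intro x
          rw [hG]
          simp only
          exact if_neg (fun hc => hy hc.1)
        simp only [hG0, lintegral_zero]
        exact zero_le
    have hindpt : ∀ ω, ind (V ω) = ({ω : Ω | ∀ n : ℕ, n ≤ N → B (Real.exp (β * n)) ω ≤ 0}).indicator
        (fun ω => ENNReal.ofReal (Real.exp (-θ' * B s ω))) ω := by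
      intro ω
      have hmem2 : (∀ i : Fin (N+1), V ω i ≤ 0)
          ↔ (∀ n : ℕ, n ≤ N → B (Real.exp (β * n)) ω ≤ 0) := by
        simp only [hV]
        constructor
        · intro h n hn
          exact h ⟨n, by omega⟩
        · intro h i
          exact h i (by omega)
      have hVL : V ω L = B s ω := by
        rw [hV, hL]
        simp only [Fin.val_last]
        rfl
      rw [hind]
      simp only [Set.indicator_apply, Set.mem_setOf_eq, hVL]
      by_cases h : ∀ n : ℕ, n ≤ N → B (Real.exp (β * n)) ω ≤ 0
      · rw [if_pos (hmem2.mpr h), if_pos h]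
      · rw [if_neg (fun hc => h (hmem2.mp hc)), if_neg h]
    calc ∫⁻ ω, ({ω : Ω | ∀ n : ℕ, n ≤ N+1 → B (Real.exp (β * n)) ω ≤ 0}).indicator
          (fun ω => ENNReal.ofReal (Real.exp (-θ * B t ω))) ω ∂P
        = ∫⁻ ω, G (V ω, X ω) ∂P := lintegral_congr hpt
      _ = ∫⁻ p, G p ∂(Measure.map (fun ω => (V ω, X ω)) P) :=
          (lintegral_map hGmeas (hVmeas.prodMk hXmeas)).symm
      _ = ∫⁻ p, G p ∂((Measure.map V P).prod (gaussianReal 0 (Real.toNNReal (t-s)))) := by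
          rw [hprod, hlawX]
      _ = ∫⁻ y, ∫⁻ x, G (y, x) ∂(gaussianReal 0 (Real.toNNReal (t-s))) ∂(Measure.map V P) :=
          lintegral_prod G hGmeas.aemeasurable
      _ ≤ ∫⁻ y, H y ∂(Measure.map V P) := lintegral_mono hinner
      _ = ENNReal.ofReal K * ∫⁻ y, ind y ∂(Measure.map V P) := by
          rw [hH]; exact lintegral_const_mul _ hindmeas
      _ = ENNReal.ofReal K * ∫⁻ ω, ind (V ω) ∂P := by rw [lintegral_map hindmeas hVmeas]
      _ = ENNReal.ofReal K * ∫⁻ ω, ({ω : Ω | ∀ n : ℕ, n ≤ N → B (Real.exp (β * n)) ω ≤ 0}).indicator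
            (fun ω => ENNReal.ofReal (Real.exp (-θ' * B s ω))) ω ∂P := by
          congr 1
          exact lintegral_congr hindpt
      _ ≤ ENNReal.ofReal K * ENNReal.ofReal ((1/2)^(N+1)
            * Real.exp (θ'^2 * s / 2 + θ' * bmW β N + bmD β N)) :=
          mul_le_mul_right (ih θ' hθ'0) _
      _ = ENNReal.ofReal ((1/2)^(N+1+1)
            * Real.exp (θ^2 * t / 2 + θ * bmW β (N+1) + bmD β (N+1))) := by
          rw [← ENNReal.ofReal_mul (by rw [hK]; positivity)]
          congr 1
          simp only [bmW, bmD]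
          rw [← ht, ← hs, ← hu, hK]
          have htsu : t = s + u * u := by rw [huv]; ring
          have hexp : Real.exp (θ^2*(t-s)/2 + (4/5)*(θ*u))
              * Real.exp (θ'^2 * s / 2 + θ' * bmW β N + bmD β N)
              = Real.exp (θ^2 * t / 2 + θ * (4/5 * t / u + bmW β N)
                  + (bmD β N + 16/25 * s / (2*(t-s)) + 4/5 * bmW β N / u)) := by
            rw [← Real.exp_add]
            congr 1
            rw [hθ'def, htsu]
            field_simp
            ring
          linear_combination (((1:ℝ)/2)^(N+1+1)) * hexp

lemma bmD_le (β : ℝ) (hq2 : 2 ≤ Real.exp (β/2)) :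
    ∀ n : ℕ, bmD β n ≤ n * (1/(Real.exp (β/2) - 1)) := by
  set q : ℝ := Real.exp (β/2) with hqdef
  have hq1 : 1 < q := by linarith
  have hq0 : 0 < q := by linarith
  have hq10 : 0 < q - 1 := by linarith
  have hq21 : 0 < q^2 - 1 := by nlinarith
  set σ : ℝ := Real.sqrt (q^2 - 1) with hσdef
  have hσ0 : 0 < σ := Real.sqrt_pos.mpr hq21
  have hσ2 : σ * σ = q^2 - 1 := Real.mul_self_sqrt hq21.le
  have hσq : σ ≤ q := by nlinarith
  have hexpn : ∀ n : ℕ, Real.exp (β * (n:ℕ)) = q^(2*n) := by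
    intro n
    rw [hqdef, ← Real.exp_nat_mul]
    congr 1
    push_cast
    ring
  have hvn : ∀ n : ℕ, Real.exp (β * (n+1:ℕ)) - Real.exp (β * (n:ℕ)) = q^(2*n) * (q^2 - 1) := by
    intro n
    rw [hexpn (n+1), hexpn n]
    ring
  have hsqn : ∀ n : ℕ, Real.sqrt (q^(2*n) * (q^2 - 1)) = q^n * σ := by
    intro n
    rw [show q^(2*n) * (q^2-1) = (q^n)^2 * (q^2-1) by ring, Real.sqrt_mul (by positivity),
      Real.sqrt_sq (by positivity)]
  have hqn1 : ∀ n : ℕ, (1:ℝ) ≤ q^n := fun n => one_le_pow₀ hq1.le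
  have hqn0 : ∀ n : ℕ, (0:ℝ) < q^n := fun n => by positivity
  -- simultaneous induction
  have key : ∀ n : ℕ, bmW β n * ((q-1)*σ) ≤ (4/5) * ((q-1)*σ + (q^n - 1)*q^2)
      ∧ bmD β n ≤ n * (1/(q-1)) := by
    intro n
    induction n with
    | zero =>
      constructor
      · simp [bmW]
      · simp [bmD]
    | succ n ihn =>
      obtain ⟨ihW, ihD⟩ := ihn
      constructor
      · simp only [bmW]
        rw [hvn n, hsqn n, hexpn (n+1)]
        have hA : 4/5 * q^(2*(n+1)) / (q^n*σ) * ((q-1)*σ) = 4/5*(q^n*q^2*(q-1)) := by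
          field_simp
          ring
        rw [add_mul, hA, pow_succ q n]
        nlinarith [ihW]
      · simp only [bmD]
        rw [hvn n, hsqn n, hexpn n]
        have h2 : (16:ℝ)/25 * q^(2*n) / (2*(q^(2*n)*(q^2-1))) = 8/25 * (1/(q^2-1)) := by
          field_simp
          ring
        have hkey' : (q-1)*σ*σ ≤ q^2*σ := by
          nlinarith [mul_le_mul_of_nonneg_right (mul_le_mul_of_nonneg_left hσq
            (by linarith : (0:ℝ) ≤ q-1)) hσ0.le, mul_nonneg hq0.le hσ0.le, hσ0.le]
        have h3 : (4:ℝ)/5 * bmW β n / (q^n * σ) ≤ 16/25 * q^2 / ((q-1)*(q^2-1)) := by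
          rw [div_le_div_iff₀ (by positivity) (by positivity), ← hσ2]
          have hmul := mul_le_mul_of_nonneg_right ihW hσ0.le
          nlinarith [hmul, hkey', mul_nonneg (mul_nonneg hq10.le hσ0.le) hσ0.le, hqn1 n,
            mul_pos (mul_pos hq0 hq0) hσ0]
        have hfact : 1/(q-1) - ((8:ℝ)/25*(1/(q^2-1)) + 16/25 * q^2 / ((q-1)*(q^2-1)))
            = (9*q^2 - 8*q - 17)/(25*(q-1)*(q^2-1)) := by
          field_simp
          ring
        have hnum : (0:ℝ) ≤ 9*q^2 - 8*q - 17 := by nlinarith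
        have hstep : (8:ℝ)/25*(1/(q^2-1)) + 16/25 * q^2 / ((q-1)*(q^2-1)) ≤ 1/(q-1) := by
          have hpos : (0:ℝ) ≤ (9*q^2 - 8*q - 17)/(25*(q-1)*(q^2-1)) := by positivity
          linarith [hfact]
        rw [h2]
        push_cast
        have := ihD
        linarith [h3, hstep]
  intro n
  exact (key n).2

/-- For `β > β₀ = 2 log(1 + 1/log 2)` and every `N`,
`P(sup_{n=0,…,N} B(e^{β n}) ≤ 0) ≤ (1/2) exp(-(log 2 - c(β)) N)`, where
`c(β) = e^{-β/2}/(1 - e^{-β/2}) ∈ (0, log 2)`. -/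
theorem expSurvival_upper_bound_large_beta
    {Ω : Type*} [MeasurableSpace Ω] (P : Measure Ω) (B : ℝ → Ω → ℝ)
    (hB : IsStandardBM P B) (β : ℝ) (hβ : 2 * Real.log (1 + 1 / Real.log 2) < β) :
    0 < Real.exp (-β / 2) / (1 - Real.exp (-β / 2)) ∧
    Real.exp (-β / 2) / (1 - Real.exp (-β / 2)) < Real.log 2 ∧
    ∀ N : ℕ,
      (P {ω | ∀ n : ℕ, n ≤ N → B (Real.exp (β * n)) ω ≤ 0}).toReal ≤
        1 / 2 * Real.exp (-(Real.log 2 -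
          Real.exp (-β / 2) / (1 - Real.exp (-β / 2))) * N) := by
  have hL2 : (0:ℝ) < Real.log 2 := Real.log_pos one_lt_two
  have hL2' : Real.log 2 < 1 := by
    have := Real.log_two_lt_d9
    linarith
  set q : ℝ := Real.exp (β/2) with hqdef
  have h1L : (1:ℝ) < 1 + 1/Real.log 2 := by
    have : 0 < 1/Real.log 2 := by positivity
    linarith
  have hqgt : 1 + 1/Real.log 2 < q := by
    rw [hqdef]
    calc 1 + 1/Real.log 2 = Real.exp (Real.log (1 + 1/Real.log 2)) :=
          (Real.exp_log (by positivity)).symm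
      _ < Real.exp (β/2) := Real.exp_lt_exp.mpr (by linarith)
  have hq2 : 2 < q := by
    have h2 : (1:ℝ) < 1/Real.log 2 := by
      rw [lt_div_iff₀ hL2]; linarith
    linarith
  have hq1 : (1:ℝ) < q := by linarith
  have hβpos : 0 < β := by
    have hlogpos : 0 < Real.log (1 + 1/Real.log 2) := Real.log_pos h1L
    linarith
  have hρ : Real.exp (-β / 2) = q⁻¹ := by
    rw [hqdef, ← Real.exp_neg]
    congr 1
    ring
  have hc : Real.exp (-β / 2) / (1 - Real.exp (-β / 2)) = 1/(q-1) := by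
    have h0 : q ≠ 0 := by positivity
    have h1 : q - 1 ≠ 0 := ne_of_gt (by linarith)
    rw [hρ]
    field_simp
  refine ⟨?_, ?_, ?_⟩
  · rw [hc]; exact div_pos one_pos (by linarith)
  · rw [hc, div_lt_iff₀ (by linarith : (0:ℝ) < q - 1)]
    have : 1/Real.log 2 < q - 1 := by linarith
    calc (1:ℝ) = Real.log 2 * (1/Real.log 2) := by field_simp
      _ < Real.log 2 * (q-1) := by
        apply mul_lt_mul_of_pos_left this hL2
  · intro N
    have main := bm_main hB hβpos N 0 le_rfl
    have hE : MeasurableSet {ω : Ω | ∀ n : ℕ, n ≤ N → B (Real.exp (β * n)) ω ≤ 0} := by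
      have : {ω : Ω | ∀ n : ℕ, n ≤ N → B (Real.exp (β * n)) ω ≤ 0}
          = ⋂ (n : ℕ), ⋂ (_ : n ≤ N), {ω : Ω | B (Real.exp (β * n)) ω ≤ 0} := by
        ext ω; simp [Set.mem_iInter]
      rw [this]
      exact MeasurableSet.iInter fun n => MeasurableSet.iInter fun _ =>
        measurableSet_le (hB.meas _) measurable_const
    have hint : ∫⁻ ω, ({ω : Ω | ∀ n : ℕ, n ≤ N → B (Real.exp (β * n)) ω ≤ 0}).indicator
        (fun ω => ENNReal.ofReal (Real.exp (-0 * B (Real.exp (β * N)) ω))) ω ∂P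
        = P {ω : Ω | ∀ n : ℕ, n ≤ N → B (Real.exp (β * n)) ω ≤ 0} := by
      simp only [neg_zero, zero_mul, Real.exp_zero, ENNReal.ofReal_one]
      rw [lintegral_indicator_const hE, one_mul]
    rw [hint] at main
    have hreal : (1/2:ℝ)^(N+1) * Real.exp (0^2 * Real.exp (β * N) / 2 + 0 * bmW β N + bmD β N)
        ≤ 1 / 2 * Real.exp (-(Real.log 2 - Real.exp (-β / 2) / (1 - Real.exp (-β / 2))) * N) := by
      rw [hc]
      have hD := bmD_le β hq2.le N
      rw [← hqdef] at hD
      have hD := bmD_le β hq2.le N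
      rw [← hqdef] at hD
      have h2N : Real.exp ((N:ℝ) * (-Real.log 2)) = (1/2)^N := by
        rw [Real.exp_nat_mul, Real.exp_neg, Real.exp_log two_pos]
        norm_num
      have hR : Real.exp (-(Real.log 2 - 1/(q-1)) * N) = (1/2:ℝ)^N * Real.exp (1/(q-1) * N) := by
        rw [show -(Real.log 2 - 1/(q-1)) * (N:ℝ) = (N:ℝ) * (-Real.log 2) + 1/(q-1) * N by ring,
          Real.exp_add, h2N]
      rw [hR]
      have hDle : 0^2 * Real.exp (β * N) / 2 + 0 * bmW β N + bmD β N ≤ 1/(q-1) * N := by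
        calc 0^2 * Real.exp (β * N) / 2 + 0 * bmW β N + bmD β N = bmD β N := by ring
          _ ≤ N * (1/(q-1)) := hD
          _ = 1/(q-1) * N := by ring
      calc (1/2:ℝ)^(N+1) * Real.exp (0^2 * Real.exp (β * N)/2 + 0*bmW β N + bmD β N)
          ≤ (1/2:ℝ)^(N+1) * Real.exp (1/(q-1)*N) :=
            mul_le_mul_of_nonneg_left (Real.exp_le_exp.mpr hDle) (by positivity)
        _ = 1/2 * ((1/2)^N * Real.exp (1/(q-1)*N)) := by rw [pow_succ]; ring
    calc (P {ω : Ω | ∀ n : ℕ, n ≤ N → B (Real.exp (β * n)) ω ≤ 0}).toReal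
        ≤ ((1/2:ℝ)^(N+1) * Real.exp (0^2 * Real.exp (β * N) / 2 + 0 * bmW β N + bmD β N)) := by
          apply ENNReal.toReal_le_of_le_ofReal (by positivity) main
      _ ≤ _ := hreal
end
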